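/- arXiv:2404.08357 — 2 statements merged into one kernel-verified Lean document; each statement's English description precedes it below -/
import Mathlib

section
/- Let μ be a valuation on K[x] and μ̄ a valuation on K̄[x] with res_K(μ̄) = μ. Let (b,γ) ∈ K̄×Λ with v_{b,γ} ≤ μ̄, and set B = B(b,γ). Then the following are equivalent: (a) there exists c ∈ Min_K B such that res_K(v_{b,γ}) = μ_Q, where Q = p_K(c); (b) there exists c ∈ Min_K B such that ε_μ(Q) = γ, where Q = p_K(c). (A ball B satisfying these conditions is called μ-optimal.) -/
open Polynomial

noncomputable section

variable {K Λ : Type*} [Field K] [AddCommGroup Λ] [LinearOrder Λ] [IsOrderedAddMonoid Λ]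

/-- `v` is a `Λ∪{∞}`-valued valuation (written additively) on the algebraic closure of `K`
with trivial support: `v b = ⊤ ↔ b = 0`. -/
structure IsValOnField (v : AlgebraicClosure K → WithTop Λ) : Prop where
  map_mul : ∀ a b, v (a * b) = v a + v b
  min_le_add : ∀ a b, min (v a) (v b) ≤ v (a + b)
  eq_top_iff : ∀ a, v a = ⊤ ↔ a = 0

/-- A valuation on `K[x]` with trivial support whose restriction to `K` is `v`. -/
structure IsValOnPoly (v : AlgebraicClosure K → WithTop Λ)
    (μ : Polynomial K → WithTop Λ) : Prop where
  map_mul : ∀ f g, μ (f * g) = μ f + μ g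
  min_le_add : ∀ f g, min (μ f) (μ g) ≤ μ (f + g)
  eq_top_iff : ∀ f, μ f = ⊤ ↔ f = 0
  extends_v : ∀ c : K, μ (C c) = v (algebraMap K (AlgebraicClosure K) c)

/-- A valuation on `K̄[x]` with trivial support whose restriction to `K̄` is `v`. -/
structure IsValOnPolyBar (v : AlgebraicClosure K → WithTop Λ)
    (ν : Polynomial (AlgebraicClosure K) → WithTop Λ) : Prop where
  map_mul : ∀ f g, ν (f * g) = ν f + ν g
  min_le_add : ∀ f g, min (ν f) (ν g) ≤ ν (f + g)
  eq_top_iff : ∀ f, ν f = ⊤ ↔ f = 0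
  extends_v : ∀ c : AlgebraicClosure K, ν (C c) = v c

/-- Restriction `res_K(ν)` of a valuation `ν` on `K̄[x]` to `K[x]`. -/
def resK (ν : Polynomial (AlgebraicClosure K) → WithTop Λ) :
    Polynomial K → WithTop Λ :=
  fun f => ν (f.map (algebraMap K (AlgebraicClosure K)))

/-- The monomial valuation `v_{a,δ}` on `K̄[x]`:
`v_{a,δ}(Σ c_k (x−a)^k) = min_k (v(c_k) + kδ)`. -/
def monoVal (v : AlgebraicClosure K → WithTop Λ) (a : AlgebraicClosure K) (δ : Λ) :
    Polynomial (AlgebraicClosure K) → WithTop Λ :=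
  fun f => (Finset.range (f.natDegree + 1)).inf
    fun k => v ((taylor a f).coeff k) + ((k • δ : Λ) : WithTop Λ)

/-- The closed ball `B(a,δ) = {b ∈ K̄ : v(b−a) ≥ δ}`. -/
def cBall (v : AlgebraicClosure K → WithTop Λ) (a : AlgebraicClosure K) (δ : Λ) :
    Set (AlgebraicClosure K) := {b | (δ : WithTop Λ) ≤ v (b - a)}

/-- The open ball `B°(a,δ) = {b ∈ K̄ : v(b−a) > δ}`. -/
def oBall (v : AlgebraicClosure K → WithTop Λ) (a : AlgebraicClosure K) (δ : Λ) :
    Set (AlgebraicClosure K) := {b | (δ : WithTop Λ) < v (b - a)}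

/-- The decomposition group `𝒟 = {σ ∈ Aut(K̄/K) : v ∘ σ = v}`. -/
def decompGroup (v : AlgebraicClosure K → WithTop Λ) :
    Set (AlgebraicClosure K ≃ₐ[K] AlgebraicClosure K) := {σ | ∀ a, v (σ a) = v a}

/-- `deg_K c`, the degree of the minimal polynomial of `c` over `K`. -/
def degK (K : Type*) [Field K] (c : AlgebraicClosure K) : ℕ := (minpoly K c).natDegree

/-- `deg_K S = min {deg_K c : c ∈ S}`. -/
def degKSet (K : Type*) [Field K] (S : Set (AlgebraicClosure K)) : ℕ := sInf (degK K '' S)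

/-- `Min_K S = {c ∈ S : deg_K c = deg_K S}`. -/
def MinK (K : Type*) [Field K] (S : Set (AlgebraicClosure K)) : Set (AlgebraicClosure K) :=
  {c ∈ S | degK K c = degKSet K S}

/-- Pointwise order on valuations on a polynomial ring. -/
def valLE {R : Type*} [Semiring R] (μ η : Polynomial R → WithTop Λ) : Prop := ∀ f, μ f ≤ η f

/-- Strict pointwise order on valuations. -/
def valLT {R : Type*} [Semiring R] (μ η : Polynomial R → WithTop Λ) : Prop := valLE μ η ∧ μ ≠ η

/-- `Λ` is a divisible group. -/
def IsDivisible (Λ : Type*) [AddCommGroup Λ] : Prop :=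
  ∀ (γ : Λ) (n : ℕ), 0 < n → ∃ γ', n • γ' = γ

/-- `IsEpsilon μ f e` says that `e = ε_μ(f) = max {(μ(f) − μ(∂_s f))/s : s ≥ 1, ∂_s f ≠ 0}`,
where `∂_s` is the `s`-th Hasse–Schmidt derivative. It is expressed without division:
`μ f ≤ s•e + μ(∂_s f)` for all admissible `s`, with equality for at least one `s`. -/
def IsEpsilon (μ : Polynomial K → WithTop Λ) (f : Polynomial K) (e : Λ) : Prop :=
  (∀ s : ℕ, 1 ≤ s → hasseDeriv s f ≠ 0 →
      μ f ≤ ((s • e : Λ) : WithTop Λ) + μ (hasseDeriv s f)) ∧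
  (∃ s : ℕ, 1 ≤ s ∧ hasseDeriv s f ≠ 0 ∧
      μ f = ((s • e : Λ) : WithTop Λ) + μ (hasseDeriv s f))

/-- `Q` is an abstract key polynomial for `μ`: `Q` is monic and `ε_μ(f) < ε_μ(Q)` for every
nonconstant `f` of degree smaller than `deg Q`. -/
def IsAbstractKeyPol (μ : Polynomial K → WithTop Λ) (Q : Polynomial K) : Prop :=
  Q.Monic ∧ ∀ f : Polynomial K, 0 < f.natDegree → f.natDegree < Q.natDegree →
    ∀ e eQ : Λ, IsEpsilon μ f e → IsEpsilon μ Q eQ → e < eQ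

/-- The coefficients of the `Q`-expansion `f = Σᵢ fᵢ Qⁱ` (with `deg fᵢ < deg Q`), obtained by
iterated division with remainder by the monic polynomial `Q`. -/
def qExpand (Q : Polynomial K) : Polynomial K → ℕ → Polynomial K
  | f, 0 => f %ₘ Q
  | f, (i + 1) => qExpand Q (f /ₘ Q) i

/-- The truncation `μ_Q` of `μ` by `Q`: on `Q`-expansions `f = Σᵢ fᵢ Qⁱ`,
`μ_Q(f) = minᵢ μ(fᵢ Qⁱ)`. -/
def truncVal (μ : Polynomial K → WithTop Λ) (Q : Polynomial K) :
    Polynomial K → WithTop Λ :=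
  fun f => (Finset.range (f.natDegree + 1)).inf fun i => μ (qExpand Q f i * Q ^ i)

namespace OptBall

lemma lam_self_add {t : Λ} (h : t + t = 0) : t = 0 := by
  rcases lt_trichotomy t 0 with h1 | h1 | h1
  · exact absurd (h ▸ add_lt_add h1 h1) (by simp)
  · exact h1
  · exact absurd (h ▸ add_lt_add h1 h1) (by simp)

section Val
variable {R : Type*} [CommRing R] {F : R → WithTop Λ}
  (hmul : ∀ a b, F (a * b) = F a + F b)
  (hmin : ∀ a b, min (F a) (F b) ≤ F (a + b))
  (h0 : F 0 = ⊤) (h1 : F 1 = 0)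

include hmul in
lemma val_one_of_ne_top (hne : F 1 ≠ ⊤) : F 1 = 0 := by
  have h2 : F ((1 : R) * 1) = F 1 + F 1 := hmul _ _
  rw [one_mul] at h2
  lift F (1 : R) to Λ using hne with t
  rw [← WithTop.coe_add, WithTop.coe_eq_coe] at h2
  rw [WithTop.coe_eq_zero]
  exact (left_eq_add.mp h2)

include hmul h1 in
lemma val_neg (a : R) : F (-a) = F a := by
  have hm1 : F (-1 : R) = 0 := by
    have h2 : F ((-1 : R) * (-1)) = F (-1) + F (-1) := hmul _ _
    rw [neg_mul_neg, one_mul, h1] at h2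
    rcases (eq_or_ne (F (-1 : R)) ⊤) with ht | ht
    · rw [ht] at h2; simp at h2
    · lift F (-1 : R) to Λ using ht with t
      rw [← WithTop.coe_add] at h2
      exact WithTop.coe_eq_zero.mpr (lam_self_add (WithTop.coe_eq_zero.mp h2.symm))
  have := hmul (-1 : R) a
  rwa [neg_one_mul, hm1, zero_add] at this

include hmul hmin h1 in
lemma val_add_eq_left {a b : R} (h : F a < F b) : F (a + b) = F a := by
  have hmin' := hmin (a + b) (-b)
  rw [val_neg hmul h1, add_neg_cancel_right] at hmin'
  refine le_antisymm ?_ ?_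
  · rcases le_total (F (a + b)) (F b) with h3 | h3
    · rwa [min_eq_left h3] at hmin'
    · rw [min_eq_right h3] at hmin'
      exact absurd (lt_of_lt_of_le h hmin') (lt_irrefl _)
  · have h4 := hmin a b
    rwa [min_eq_left h.le] at h4

include hmul h1 in
lemma val_multiset_prod (M : Multiset R) : F M.prod = (M.map F).sum := by
  induction M using Multiset.induction_on with
  | empty => simpa using h1
  | cons a M ih => simp [hmul, ih]

include hmin h0 in
lemma val_sum_le {ι : Type*} (s : Finset ι) (f : ι → R) (C : WithTop Λ)
    (h : ∀ i ∈ s, C ≤ F (f i)) : C ≤ F (∑ i ∈ s, f i) := by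
  induction s using Finset.cons_induction with
  | empty => simp [h0]
  | cons a s ha ih =>
    rw [Finset.sum_cons]
    refine le_trans (le_min (h a (Finset.mem_cons_self a s)) (ih fun i hi => h i (Finset.mem_cons_of_mem hi))) (hmin _ _)

include hmin h0 in
lemma val_le_sum_add {ι : Type*} (s : Finset ι) (f : ι → R) (C e : WithTop Λ)
    (h : ∀ i ∈ s, C ≤ F (f i) + e) : C ≤ F (∑ i ∈ s, f i) + e := by
  induction s using Finset.cons_induction with
  | empty => simp [h0, top_add]
  | cons a s ha ih =>
    rw [Finset.sum_cons]
    have hm := hmin (f a) (∑ i ∈ s, f i)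
    have h2 := ih (fun i hi => h i (Finset.mem_cons_of_mem hi))
    have h3 := h a (Finset.mem_cons_self a s)
    refine le_trans ?_ (add_le_add_left hm _)
    rcases le_total (F (f a)) (F (∑ i ∈ s, f i)) with hle | hle
    · rwa [min_eq_left hle]
    · rwa [min_eq_right hle]

include hmin h0 h1 in
lemma val_natCast_nonneg (n : ℕ) : 0 ≤ F (n : R) := by
  induction n with
  | zero => simp [h0]
  | succ n ih =>
    push_cast
    refine le_trans (le_min ih (le_of_eq h1.symm)) (hmin _ _)

end Val
section Gauss
variable {R : Type*} [Field R] (v : R → WithTop Λ) (δ : Λ)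

/-- Gauss inf on coefficients. -/
def GI (p : R[X]) : WithTop Λ :=
  (Finset.range (p.natDegree + 1)).inf fun k => v (p.coeff k) + ((k • δ : Λ) : WithTop Λ)

/-- term -/
def GTerm (p : R[X]) (k : ℕ) : WithTop Λ := v (p.coeff k) + ((k • δ : Λ) : WithTop Λ)

lemma GI_def (p : R[X]) : GI v δ p = (Finset.range (p.natDegree + 1)).inf (GTerm v δ p) := rfl

variable {v}
variable (htop : ∀ a : R, v a = ⊤ ↔ a = 0)

include htop in
lemma GI_le (p : R[X]) (k : ℕ) : GI v δ p ≤ GTerm v δ p k := by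
  rcases le_or_gt k p.natDegree with h | h
  · exact Finset.inf_le (Finset.mem_range.mpr (Nat.lt_succ_of_le h))
  · have : p.coeff k = 0 := Polynomial.coeff_eq_zero_of_natDegree_lt h
    simp [GTerm, this, (htop 0).mpr rfl, top_add]

include htop in
lemma GI_eq_inf (p : R[X]) {N : ℕ} (hN : p.natDegree ≤ N) :
    GI v δ p = (Finset.range (N + 1)).inf (GTerm v δ p) := by
  refine le_antisymm (Finset.le_inf fun k _ => GI_le δ htop p k) ?_
  exact Finset.inf_mono (Finset.range_subset_range.mpr (by omega))

lemma GI_exists (p : R[X]) : ∃ k ≤ p.natDegree, GI v δ p = GTerm v δ p k := by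
  obtain ⟨k, hk, he⟩ := Finset.exists_mem_eq_inf (Finset.range (p.natDegree + 1))
    (Finset.nonempty_range_iff.mpr (Nat.succ_ne_zero _)) (GTerm v δ p)
  exact ⟨k, Nat.lt_succ_iff.mp (Finset.mem_range.mp hk), he⟩

include htop in
lemma GI_zero : GI v δ (0 : R[X]) = ⊤ := by
  simp [GI, (htop 0).mpr rfl, top_add]

include htop in
lemma GI_ne_top {p : R[X]} (hp : p ≠ 0) : GI v δ p ≠ ⊤ := by
  have h1 : GI v δ p ≤ GTerm v δ p p.natDegree := GI_le δ htop p _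
  have h2 : v (p.coeff p.natDegree) ≠ ⊤ := by
    rw [ne_eq, htop]
    exact fun h => hp (Polynomial.leadingCoeff_eq_zero.mp h)
  intro h
  rw [h, top_le_iff, GTerm, WithTop.add_eq_top] at h1
  rcases h1 with h1 | h1
  · exact h2 h1
  · exact WithTop.coe_ne_top h1

include htop in
lemma GI_eq_top_iff {p : R[X]} : GI v δ p = ⊤ ↔ p = 0 := by
  constructor
  · intro h; by_contra hp; exact GI_ne_top δ htop hp h
  · rintro rfl; exact GI_zero δ htop

variable (hmin : ∀ a b : R, min (v a) (v b) ≤ v (a + b))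

include hmin htop in
lemma GI_add (p q : R[X]) : min (GI v δ p) (GI v δ q) ≤ GI v δ (p + q) := by
  rw [GI_def v δ (p + q)]
  refine Finset.le_inf fun k _ => ?_
  have h1 : min (v (p.coeff k)) (v (q.coeff k)) + ((k • δ : Λ) : WithTop Λ) ≤ GTerm v δ (p + q) k := by
    simp only [GTerm, Polynomial.coeff_add]
    exact add_le_add_left (hmin _ _) _
  refine le_trans ?_ h1
  rcases le_total (v (p.coeff k)) (v (q.coeff k)) with h | h
  · rw [min_eq_left h]
    exact le_trans (min_le_left _ _) (GI_le δ htop p k)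
  · rw [min_eq_right h]
    exact le_trans (min_le_right _ _) (GI_le δ htop q k)

variable (hvmul : ∀ a b : R, v (a * b) = v a + v b)

include htop hvmul in
lemma GT_mul_term {p q : R[X]} (i j : ℕ) :
    GI v δ p + GI v δ q ≤ v (p.coeff i * q.coeff j) + (((i + j) • δ : Λ) : WithTop Λ) := by
  rw [hvmul, add_nsmul, WithTop.coe_add]
  calc GI v δ p + GI v δ q ≤ GTerm v δ p i + GTerm v δ q j :=
        add_le_add (GI_le δ htop p i) (GI_le δ htop q j)
    _ = v (p.coeff i) + v (q.coeff j) + (((i • δ : Λ) : WithTop Λ) + ((j • δ : Λ) : WithTop Λ)) := by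
        simp only [GTerm]; abel

include htop hvmul hmin in
lemma GI_mul (p q : R[X]) : GI v δ (p * q) = GI v δ p + GI v δ q := by
  have hv0 : v 0 = ⊤ := (htop 0).mpr rfl
  rcases eq_or_ne p 0 with rfl | hp
  · simp [GI_zero δ htop, top_add]
  rcases eq_or_ne q 0 with rfl | hq
  · simp [GI_zero δ htop, add_top]
  -- ≥ direction
  have hge : GI v δ p + GI v δ q ≤ GI v δ (p * q) := by
    rw [GI_def v δ (p * q)]
    refine Finset.le_inf fun k _ => ?_
    simp only [GTerm]
    rw [Polynomial.coeff_mul]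
    -- sum over antidiagonal
    have : ∀ x ∈ Finset.HasAntidiagonal.antidiagonal k,
        GI v δ p + GI v δ q ≤ v (p.coeff x.1 * q.coeff x.2) + ((k • δ : Λ) : WithTop Λ) := by
      intro x hx
      have hxk : x.1 + x.2 = k := Finset.HasAntidiagonal.mem_antidiagonal.mp hx
      rw [← hxk]
      exact GT_mul_term δ htop hvmul x.1 x.2
    -- need: C ≤ v (sum) + e
    revert this
    generalize (Finset.HasAntidiagonal.antidiagonal k) = s
    generalize (GI v δ p + GI v δ q) = C
    intro hterm
    induction s using Finset.cons_induction with
    | empty => simp [hv0, top_add]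
    | cons a s ha ih =>
      rw [Finset.sum_cons]
      have h1 : min (v (p.coeff a.1 * q.coeff a.2)) (v (∑ x ∈ s, p.coeff x.1 * q.coeff x.2))
          ≤ v (p.coeff a.1 * q.coeff a.2 + ∑ x ∈ s, p.coeff x.1 * q.coeff x.2) := hmin _ _
      have h2 := ih fun i hi => hterm i (Finset.mem_cons_of_mem hi)
      have h3 := hterm a (Finset.mem_cons_self a s)
      refine le_trans ?_ (add_le_add_left h1 _)
      rcases le_total (v (p.coeff a.1 * q.coeff a.2)) (v (∑ x ∈ s, p.coeff x.1 * q.coeff x.2)) with h | h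
      · rwa [min_eq_left h]
      · rwa [min_eq_right h]
  -- ≤ direction
  refine le_antisymm ?_ hge
  classical
  have hPp : ∃ k, GTerm v δ p k = GI v δ p := by
    obtain ⟨k, _, hk⟩ := GI_exists δ p; exact ⟨k, hk.symm⟩
  have hPq : ∃ k, GTerm v δ q k = GI v δ q := by
    obtain ⟨k, _, hk⟩ := GI_exists δ q; exact ⟨k, hk.symm⟩
  set i0 := Nat.find hPp with hi0def
  set j0 := Nat.find hPq with hj0def
  have hi0 : GTerm v δ p i0 = GI v δ p := Nat.find_spec hPp
  have hj0 : GTerm v δ q j0 = GI v δ q := Nat.find_spec hPq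
  have hilt : ∀ i < i0, GI v δ p < GTerm v δ p i := fun i hi =>
    lt_of_le_of_ne (GI_le δ htop p i) (fun h => Nat.find_min hPp hi h.symm)
  have hjlt : ∀ j < j0, GI v δ q < GTerm v δ q j := fun j hj =>
    lt_of_le_of_ne (GI_le δ htop q j) (fun h => Nat.find_min hPq hj h.symm)
  have hpne : GI v δ p ≠ ⊤ := GI_ne_top δ htop hp
  have hqne : GI v δ q ≠ ⊤ := GI_ne_top δ htop hq
  set m := i0 + j0 with hmdef
  -- the main term
  have hmain : v (p.coeff i0 * q.coeff j0) + ((m • δ : Λ) : WithTop Λ) = GI v δ p + GI v δ q := by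
    rw [hvmul, hmdef, add_nsmul, WithTop.coe_add, ← hi0, ← hj0]; simp only [GTerm]; abel
  -- strict bound on other terms
  have hother : ∀ x ∈ (Finset.HasAntidiagonal.antidiagonal m).erase (i0, j0),
      v (p.coeff i0 * q.coeff j0) < v (p.coeff x.1 * q.coeff x.2) := by
    intro x hx
    have hxne : x ≠ (i0, j0) := Finset.ne_of_mem_erase hx
    have hxk : x.1 + x.2 = m := Finset.HasAntidiagonal.mem_antidiagonal.mp (Finset.mem_of_mem_erase hx)
    have hstrict : GI v δ p + GI v δ q < GTerm v δ p x.1 + GTerm v δ q x.2 := by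
      rcases lt_or_ge x.1 i0 with h | h
      · exact WithTop.add_lt_add_of_lt_of_le hqne (hilt x.1 h) (GI_le δ htop q x.2)
      · have hx2 : x.2 < j0 := by
          rcases lt_or_eq_of_le h with h' | h'
          · omega
          · exfalso; apply hxne; ext
            · exact h'.symm
            · omega
        exact WithTop.add_lt_add_of_le_of_lt hpne (GI_le δ htop p x.1) (hjlt x.2 hx2)
    have harr : GTerm v δ p x.1 + GTerm v δ q x.2
        = v (p.coeff x.1 * q.coeff x.2) + ((m • δ : Λ) : WithTop Λ) := by
      rw [hvmul, ← hxk, add_nsmul, WithTop.coe_add]; simp only [GTerm]; abel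
    have h2 : v (p.coeff i0 * q.coeff j0) + ((m • δ : Λ) : WithTop Λ)
        < v (p.coeff x.1 * q.coeff x.2) + ((m • δ : Λ) : WithTop Λ) := by
      rw [hmain, ← harr]; exact hstrict
    exact lt_of_add_lt_add_right h2
  -- value of coefficient m
  have hsplit : (p * q).coeff m = p.coeff i0 * q.coeff j0
      + ∑ x ∈ (Finset.HasAntidiagonal.antidiagonal m).erase (i0, j0), p.coeff x.1 * q.coeff x.2 := by
    rw [Polynomial.coeff_mul]
    have hmem : ((i0, j0) : ℕ × ℕ) ∈ Finset.HasAntidiagonal.antidiagonal m := Finset.HasAntidiagonal.mem_antidiagonal.mpr rfl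
    exact (Finset.add_sum_erase _ (fun x => p.coeff x.1 * q.coeff x.2) hmem).symm
  have hrest : v (p.coeff i0 * q.coeff j0)
      < v (∑ x ∈ (Finset.HasAntidiagonal.antidiagonal m).erase (i0, j0), p.coeff x.1 * q.coeff x.2) := by
    rcases Finset.eq_empty_or_nonempty ((Finset.HasAntidiagonal.antidiagonal m).erase (i0, j0)) with he | he
    · rw [he, Finset.sum_empty, hv0]
      refine lt_of_le_of_ne le_top ?_
      intro h
      rw [h, WithTop.top_add] at hmain
      exact (WithTop.add_eq_top.mp hmain.symm).elim (fun h => hpne h) (fun h => hqne h)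
    · obtain ⟨x1, hx1, hinf⟩ := Finset.exists_mem_eq_inf _ he
        (fun x => v (p.coeff x.1 * q.coeff x.2))
      have hlb : ((Finset.HasAntidiagonal.antidiagonal m).erase (i0, j0)).inf
            (fun x => v (p.coeff x.1 * q.coeff x.2))
          ≤ v (∑ x ∈ (Finset.HasAntidiagonal.antidiagonal m).erase (i0, j0), p.coeff x.1 * q.coeff x.2) := by
        generalize ((Finset.HasAntidiagonal.antidiagonal m).erase (i0, j0)) = s
        induction s using Finset.cons_induction with
        | empty => simp [hv0]
        | cons a s ha ih =>
          rw [Finset.sum_cons, Finset.inf_cons]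
          exact le_trans (min_le_min (le_refl _) ih) (hmin _ _)
      refine lt_of_lt_of_le ?_ hlb
      rw [hinf]
      exact hother x1 hx1
  have hcoeff : v ((p * q).coeff m) = v (p.coeff i0 * q.coeff j0) := by
    rw [hsplit]
    have hv1 : v (1 : R) = 0 := val_one_of_ne_top hvmul (by rw [ne_eq, htop]; exact one_ne_zero)
    exact val_add_eq_left hvmul hmin hv1 hrest
  calc GI v δ (p * q) ≤ GTerm v δ (p * q) m := GI_le δ htop (p * q) m
    _ = GI v δ p + GI v δ q := by rw [GTerm] at hi0 ⊢; rw [hcoeff, hmain]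

end Gauss


section MonoValLemmas
variable {v : AlgebraicClosure K → WithTop Λ} (δ : Λ) (a : AlgebraicClosure K)

lemma monoVal_eq_GI (f : Polynomial (AlgebraicClosure K)) :
    monoVal v a δ f = GI v δ (taylor a f) := by
  unfold monoVal GI
  rw [natDegree_taylor]

variable (hv : IsValOnField v)

include hv

lemma v_zero : v 0 = ⊤ := (hv.eq_top_iff 0).mpr rfl

lemma v_one : v 1 = 0 :=
  val_one_of_ne_top hv.map_mul (by rw [ne_eq, hv.eq_top_iff]; exact one_ne_zero)

lemma v_neg' (x : AlgebraicClosure K) : v (-x) = v x :=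
  val_neg hv.map_mul (v_one hv) x

lemma v_sub_comm (x y : AlgebraicClosure K) : v (x - y) = v (y - x) := by
  rw [← v_neg' hv (x - y), neg_sub]

lemma monoVal_mul (f g : Polynomial (AlgebraicClosure K)) :
    monoVal v a δ (f * g) = monoVal v a δ f + monoVal v a δ g := by
  rw [monoVal_eq_GI, monoVal_eq_GI, monoVal_eq_GI, taylor_mul]
  exact GI_mul δ hv.eq_top_iff hv.min_le_add hv.map_mul _ _

lemma monoVal_add (f g : Polynomial (AlgebraicClosure K)) :
    min (monoVal v a δ f) (monoVal v a δ g) ≤ monoVal v a δ (f + g) := by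
  rw [monoVal_eq_GI, monoVal_eq_GI, monoVal_eq_GI, map_add]  -- taylor is linear
  exact GI_add δ hv.eq_top_iff hv.min_le_add _ _

omit hv in
lemma monoVal_C (x : AlgebraicClosure K) : monoVal v a δ (C x) = v x := by
  rw [monoVal_eq_GI, taylor_C, GI_def]
  have h1 : (C x : Polynomial (AlgebraicClosure K)).natDegree = 0 := natDegree_C x
  rw [h1]
  simp [GTerm]

lemma monoVal_one : monoVal v a δ 1 = 0 := by
  rw [← C_1, monoVal_C δ a, v_one hv]

lemma monoVal_eq_top_iff (f : Polynomial (AlgebraicClosure K)) :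
    monoVal v a δ f = ⊤ ↔ f = 0 := by
  rw [monoVal_eq_GI, GI_eq_top_iff δ hv.eq_top_iff]
  constructor
  · intro h
    have h2 := congrArg (⇑(taylor (-a))) h
    rw [taylor_taylor, neg_add_cancel, taylor_zero, map_zero] at h2
    exact h2
  · rintro rfl; exact map_zero _

lemma monoVal_le_eval (f : Polynomial (AlgebraicClosure K)) :
    monoVal v a δ f ≤ v (f.eval a) := by
  rw [monoVal_eq_GI]
  have h := GI_le δ hv.eq_top_iff (taylor a f) 0
  rwa [GTerm, taylor_coeff_zero, zero_smul, WithTop.coe_zero, add_zero] at h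

lemma monoVal_X_sub_C (d : AlgebraicClosure K) :
    monoVal v a δ (X - C d) = min (v (a - d)) (δ : WithTop Λ) := by
  rw [monoVal_eq_GI, GI_def, natDegree_taylor, natDegree_X_sub_C]
  have h0 : GTerm v δ (taylor a (X - C d)) 0 = v (a - d) := by
    rw [GTerm, taylor_coeff_zero]
    simp
  have h1 : GTerm v δ (taylor a (X - C d)) 1 = (δ : WithTop Λ) := by
    rw [GTerm, taylor_coeff_one]
    simp [v_one hv]
  rw [show (1 + 1) = 2 from rfl, Finset.range_add_one, Finset.range_add_one, Finset.range_zero,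
    Finset.inf_insert, Finset.inf_insert, Finset.inf_empty, h0, h1]
  simp [min_comm]

lemma v_pow_ge {γ : Λ} {u : AlgebraicClosure K} (hu : (γ : WithTop Λ) ≤ v u) (i : ℕ) :
    ((i • γ : Λ) : WithTop Λ) ≤ v (u ^ i) := by
  induction i with
  | zero => simp [pow_zero, v_one hv]
  | succ i ih =>
    rw [pow_succ, hv.map_mul, succ_nsmul, WithTop.coe_add]
    exact add_le_add ih hu

lemma monoVal_le_translate {γ : Λ} {b c : AlgebraicClosure K}
    (hbc : (γ : WithTop Λ) ≤ v (b - c)) (f : Polynomial (AlgebraicClosure K)) :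
    monoVal v c γ f ≤ monoVal v b γ f := by
  rw [monoVal_eq_GI, monoVal_eq_GI]
  have hbt : taylor b f = taylor (b - c) (taylor c f) := by
    rw [taylor_taylor, sub_add_cancel]
  rw [hbt]
  set t := taylor c f with ht
  rw [GI_def v γ (taylor (b - c) t)]
  refine Finset.le_inf fun j _ => ?_
  have hco : (taylor (b - c) t).coeff j = eval (b - c) (hasseDeriv j t) := taylor_coeff _ _ _
  rw [GTerm, hco, Polynomial.eval_eq_sum_range]
  refine val_le_sum_add hv.min_le_add (v_zero hv) _ _ _ _ (fun i _ => ?_)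
  have hcoeff : (hasseDeriv j t).coeff i = ((i + j).choose j : AlgebraicClosure K) * t.coeff (i + j) :=
    hasseDeriv_coeff j t i
  have hch : (0 : WithTop Λ) ≤ v (((i + j).choose j : AlgebraicClosure K)) :=
    val_natCast_nonneg hv.min_le_add (v_zero hv) (v_one hv) _
  have hpow : ((i • γ : Λ) : WithTop Λ) ≤ v ((b - c) ^ i) := v_pow_ge hv hbc i
  calc GI v γ t ≤ v (t.coeff (i + j)) + (((i + j) • γ : Λ) : WithTop Λ) :=
        GI_le γ hv.eq_top_iff t (i + j)
    _ = 0 + (v (t.coeff (i + j)) + (((i • γ : Λ) : WithTop Λ) + ((j • γ : Λ) : WithTop Λ))) := by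
        rw [add_nsmul, WithTop.coe_add, zero_add]
    _ ≤ v (((i + j).choose j : AlgebraicClosure K)) +
        (v (t.coeff (i + j)) + (v ((b - c) ^ i) + ((j • γ : Λ) : WithTop Λ))) :=
        add_le_add hch (add_le_add_right (add_le_add_left hpow _) _)
    _ = v ((hasseDeriv j t).coeff i * (b - c) ^ i) + ((j • γ : Λ) : WithTop Λ) := by
        rw [hcoeff, hv.map_mul, hv.map_mul]; abel

lemma monoVal_translate {γ : Λ} {b c : AlgebraicClosure K}
    (hbc : (γ : WithTop Λ) ≤ v (b - c)) : monoVal v b γ = monoVal v c γ := by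
  have hcb : (γ : WithTop Λ) ≤ v (c - b) := by rwa [v_sub_comm hv]
  funext f
  exact le_antisymm (monoVal_le_translate hv hcb f) (monoVal_le_translate hv hbc f)

end MonoValLemmas

section Eps
variable {v : AlgebraicClosure K → WithTop Λ} (hv : IsValOnField v)
  (c : AlgebraicClosure K) (γ : Λ)

lemma map_hasseDeriv (f : Polynomial K) (s : ℕ) :
    (hasseDeriv s f).map (algebraMap K (AlgebraicClosure K))
      = hasseDeriv s (f.map (algebraMap K (AlgebraicClosure K))) := by
  ext k
  simp [coeff_map, hasseDeriv_coeff]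

include hv

lemma eps_w_le (h : Polynomial (AlgebraicClosure K)) (s : ℕ) :
    monoVal v c γ h ≤ ((s • γ : Λ) : WithTop Λ) + monoVal v c γ (hasseDeriv s h) := by
  rcases eq_or_ne (hasseDeriv s h) 0 with h0 | h0
  · rw [h0, (monoVal_eq_top_iff γ c hv 0).mpr rfl, add_top]
    exact le_top
  rw [monoVal_eq_GI γ c (hasseDeriv s h)]
  obtain ⟨k, hk, hatt⟩ := GI_exists γ (taylor c (hasseDeriv s h))
  rw [hatt, GTerm]
  have hcomp : hasseDeriv k (hasseDeriv s h) = (k + s).choose k • hasseDeriv (k + s) h :=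
    LinearMap.congr_fun (hasseDeriv_comp k s) h
  have hco : (taylor c (hasseDeriv s h)).coeff k
      = ((k + s).choose k : AlgebraicClosure K) * (taylor c h).coeff (k + s) := by
    rw [taylor_coeff, taylor_coeff, hcomp]
    simp [nsmul_eq_mul]
  have hch : (0 : WithTop Λ) ≤ v (((k + s).choose k : AlgebraicClosure K)) :=
    val_natCast_nonneg hv.min_le_add (v_zero hv) (v_one hv) _
  calc monoVal v c γ h
      ≤ v ((taylor c h).coeff (k + s)) + (((k + s) • γ : Λ) : WithTop Λ) := by
        rw [monoVal_eq_GI γ c h]; exact GI_le γ hv.eq_top_iff _ _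
    _ = 0 + (v ((taylor c h).coeff (k + s)) + (((k • γ : Λ) : WithTop Λ) + ((s • γ : Λ) : WithTop Λ))) := by
        rw [add_nsmul, WithTop.coe_add, zero_add]
    _ ≤ v (((k + s).choose k : AlgebraicClosure K)) +
        (v ((taylor c h).coeff (k + s)) + (((k • γ : Λ) : WithTop Λ) + ((s • γ : Λ) : WithTop Λ))) :=
        add_le_add_left hch _
    _ = ((s • γ : Λ) : WithTop Λ) + (v ((taylor c (hasseDeriv s h)).coeff k) + ((k • γ : Λ) : WithTop Λ)) := by
        rw [hco, hv.map_mul]; abel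

lemma eps_w_exists (h : Polynomial (AlgebraicClosure K)) (hne : h ≠ 0)
    (hroot : eval c h = 0) :
    ∃ s, 1 ≤ s ∧ hasseDeriv s h ≠ 0 ∧
      monoVal v c γ h = ((s • γ : Λ) : WithTop Λ) + monoVal v c γ (hasseDeriv s h) := by
  obtain ⟨k, hk, hatt⟩ := GI_exists γ (taylor c h)
  have hweq : monoVal v c γ h = GTerm v γ (taylor c h) k := by
    rw [monoVal_eq_GI γ c h]; exact hatt
  have hwne : monoVal v c γ h ≠ ⊤ := fun ht => hne ((monoVal_eq_top_iff γ c hv h).mp ht)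
  have htk : (taylor c h).coeff k ≠ 0 := by
    intro h0
    apply hwne
    rw [hweq, GTerm, h0, (hv.eq_top_iff 0).mpr rfl, top_add]
  have hk1 : 1 ≤ k := by
    rcases Nat.eq_zero_or_pos k with rfl | hpos
    · exfalso
      apply htk
      rwa [taylor_coeff_zero c h]
    · exact hpos
  have hevald : eval c (hasseDeriv k h) = (taylor c h).coeff k := (taylor_coeff c h k).symm
  have hdne : hasseDeriv k h ≠ 0 := by
    intro h0
    rw [h0, eval_zero] at hevald
    exact htk hevald.symm
  refine ⟨k, hk1, hdne, le_antisymm (eps_w_le hv c γ h k) ?_⟩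
  have h1 : monoVal v c γ (hasseDeriv k h) ≤ v ((taylor c h).coeff k) := by
    rw [← hevald]
    exact monoVal_le_eval γ c hv _
  calc ((k • γ : Λ) : WithTop Λ) + monoVal v c γ (hasseDeriv k h)
      ≤ ((k • γ : Λ) : WithTop Λ) + v ((taylor c h).coeff k) := add_le_add_right h1 _
    _ = monoVal v c γ h := by rw [hweq, GTerm]; abel

end Eps

section LowDeg
variable {v : AlgebraicClosure K → WithTop Λ} (hv : IsValOnField v)
  {μ : Polynomial K → WithTop Λ} (hμ : IsValOnPoly v μ)
  {μb : Polynomial (AlgebraicClosure K) → WithTop Λ} (hμb : IsValOnPolyBar v μb)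
  (hres : resK μb = μ)
  (c : AlgebraicClosure K) (γ : Λ)

local notation "φ" => algebraMap K (AlgebraicClosure K)

include hv

lemma w_X_sub_C_root (d : AlgebraicClosure K) (hd : v (c - d) < (γ : WithTop Λ)) :
    monoVal v c γ (X - C d) = v (c - d) := by
  rw [monoVal_X_sub_C γ c hv d, min_eq_left hd.le]

lemma w_X_sub_C_self : monoVal v c γ (X - C c) = (γ : WithTop Λ) := by
  rw [monoVal_X_sub_C γ c hv c, sub_self, (hv.eq_top_iff 0).mpr rfl]
  simp

include hμb in
lemma mub_X_sub_C_root (hlew : ∀ h, monoVal v c γ h ≤ μb h)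
    (d : AlgebraicClosure K) (hd : v (c - d) < (γ : WithTop Λ)) :
    μb (X - C d) = v (c - d) := by
  have h1 : (γ : WithTop Λ) ≤ μb (X - C c) := by
    have := hlew (X - C c)
    rwa [w_X_sub_C_self hv c γ] at this
  have h2 : μb (C (c - d)) = v (c - d) := hμb.extends_v _
  have hμb1 : μb 1 = 0 := by
    have := hμb.extends_v 1
    rwa [map_one, v_one hv] at this
  have h3 : μb (C (c - d) + (X - C c)) = μb (C (c - d)) := by
    refine val_add_eq_left hμb.map_mul hμb.min_le_add hμb1 ?_
    rw [h2]
    exact lt_of_lt_of_le hd h1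
  have h4 : C (c - d) + (X - C c) = X - C d := by
    rw [map_sub]; ring
  rw [← h4, h3, h2]

include hμb hres in
lemma low_deg (hlew : ∀ h, monoVal v c γ h ≤ μb h) (f : Polynomial K) (hf : f ≠ 0)
    (hroots : ∀ d ∈ (f.map φ).roots, v (c - d) < (γ : WithTop Λ)) :
    μ f = monoVal v c γ (f.map φ) ∧ monoVal v c γ (f.map φ) = v (eval c (f.map φ)) := by
  set F := f.map φ with hF
  have hFne : F ≠ 0 := by
    rw [hF, ne_eq, Polynomial.map_eq_zero_iff (algebraMap K (AlgebraicClosure K)).injective]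
    exact hf
  have hcard : Multiset.card F.roots = F.natDegree :=
    Polynomial.splits_iff_card_roots.mp (IsAlgClosed.splits F)
  have hsplit : C F.leadingCoeff * (F.roots.map fun d => X - C d).prod = F :=
    C_leadingCoeff_mul_prod_multiset_X_sub_C hcard
  -- μ f = μb F
  have hμf : μ f = μb F := (congrFun hres f).symm
  have hμb1 : μb 1 = 0 := by
    have := hμb.extends_v 1
    rwa [map_one, v_one hv] at this
  have hw1 : monoVal v c γ (1 : Polynomial (AlgebraicClosure K)) = 0 := monoVal_one γ c hv
  have hv1 : v 1 = 0 := v_one hv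
  -- three computations
  have hμbF : μb F = v F.leadingCoeff
      + (F.roots.map fun d => v (c - d)).sum := by
    conv_lhs => rw [← hsplit]
    rw [hμb.map_mul, hμb.extends_v,
      val_multiset_prod hμb.map_mul hμb1, Multiset.map_map]
    congr 1
    refine congrArg Multiset.sum (Multiset.map_congr rfl fun d hd => ?_)
    exact mub_X_sub_C_root hv hμb c γ hlew d (hroots d hd)
  have hwF : monoVal v c γ F = v F.leadingCoeff
      + (F.roots.map fun d => v (c - d)).sum := by
    conv_lhs => rw [← hsplit]
    rw [monoVal_mul γ c hv, monoVal_C γ c,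
      val_multiset_prod (monoVal_mul γ c hv) hw1, Multiset.map_map]
    congr 1
    refine congrArg Multiset.sum (Multiset.map_congr rfl fun d hd => ?_)
    exact w_X_sub_C_root hv c γ d (hroots d hd)
  have hevF : v (eval c F) = v F.leadingCoeff
      + (F.roots.map fun d => v (c - d)).sum := by
    have hmulev : ∀ p q : Polynomial (AlgebraicClosure K),
        v (eval c (p * q)) = v (eval c p) + v (eval c q) := by
      intro p q; rw [eval_mul, hv.map_mul]
    have h1ev : v (eval c (1 : Polynomial (AlgebraicClosure K))) = 0 := by
      rw [eval_one, hv1]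
    conv_lhs => rw [← hsplit]
    rw [hmulev, eval_C,
      val_multiset_prod (F := fun p => v (eval c p)) hmulev h1ev, Multiset.map_map]
    congr 1
    refine congrArg Multiset.sum (Multiset.map_congr rfl fun d hd => ?_)
    simp
  exact ⟨by rw [hμf, hμbF, hwF], by rw [hwF, hevF]⟩

end LowDeg

section Step1
variable {v : AlgebraicClosure K → WithTop Λ} (hv : IsValOnField v)
  {μ : Polynomial K → WithTop Λ} (hμ : IsValOnPoly v μ)
  {μb : Polynomial (AlgebraicClosure K) → WithTop Λ} (hμb : IsValOnPolyBar v μb)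
  (hres : resK μb = μ)
  (b c : AlgebraicClosure K) (γ : Λ)

local notation "φ" => algebraMap K (AlgebraicClosure K)

include hv

lemma roots_lt (hc : c ∈ MinK K (cBall v b γ)) (f : Polynomial K) (hf : f ≠ 0)
    (hdeg : f.natDegree < degK K c) :
    ∀ d ∈ (f.map φ).roots, v (c - d) < (γ : WithTop Λ) := by
  intro d hd
  by_contra hlt
  have hged : (γ : WithTop Λ) ≤ v (c - d) := not_lt.mp hlt
  -- d is a root of f
  have hFne : f.map φ ≠ 0 := by
    rw [ne_eq, Polynomial.map_eq_zero_iff (algebraMap K (AlgebraicClosure K)).injective]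
    exact hf
  have hroot : aeval d f = 0 := by
    have h1 := (Polynomial.mem_roots hFne).mp hd
    rw [Polynomial.IsRoot, Polynomial.eval_map, ← Polynomial.aeval_def] at h1
    exact h1
  have hdvd : minpoly K d ∣ f := minpoly.dvd K d hroot
  have hdegd : degK K d ≤ f.natDegree := Polynomial.natDegree_le_of_dvd hdvd hf
  -- d is in the ball
  have hdball : d ∈ cBall v b γ := by
    show (γ : WithTop Λ) ≤ v (d - b)
    have hsum : (d - c) + (c - b) = d - b := by ring
    have h2 : min (v (d - c)) (v (c - b)) ≤ v (d - b) := by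
      rw [← hsum]; exact hv.min_le_add _ _
    have h3 : (γ : WithTop Λ) ≤ v (d - c) := by rwa [v_sub_comm hv]
    exact le_trans (le_min h3 hc.1) h2
  have h4 : degKSet K (cBall v b γ) ≤ degK K d :=
    Nat.sInf_le ⟨d, hdball, rfl⟩
  have h5 : degK K c = degKSet K (cBall v b γ) := hc.2
  omega

include hμb hres in
lemma eps_iff_WQ (hlew : ∀ h, monoVal v c γ h ≤ μb h) (hc : c ∈ MinK K (cBall v b γ)) :
    μ (minpoly K c) = monoVal v c γ ((minpoly K c).map φ) ↔ IsEpsilon μ (minpoly K c) γ := by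
  have hint : IsIntegral K c := Algebra.IsIntegral.isIntegral c
  set Q := minpoly K c with hQdef
  have hQ0 : Q ≠ 0 := minpoly.ne_zero hint
  have hn1 : 1 ≤ Q.natDegree := minpoly.natDegree_pos hint
  have hdegQ : degK K c = Q.natDegree := rfl
  have hQmapne : Q.map φ ≠ 0 := by
    rw [ne_eq, Polynomial.map_eq_zero_iff (algebraMap K (AlgebraicClosure K)).injective]
    exact hQ0
  have hQeval : eval c (Q.map φ) = 0 := by
    rw [Polynomial.eval_map, ← Polynomial.aeval_def]
    exact minpoly.aeval K c
  -- for s ≥ 1, ∂ₛQ ≠ 0 : μ(∂ₛQ) = w(∂ₛ(Q.map φ))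
  have hder : ∀ s : ℕ, 1 ≤ s → hasseDeriv s Q ≠ 0 →
      μ (hasseDeriv s Q) = monoVal v c γ (hasseDeriv s (Q.map φ)) := by
    intro s hs hne
    have hdeg : (hasseDeriv s Q).natDegree < degK K c := by
      have h1 := Polynomial.natDegree_hasseDeriv_le Q s
      omega
    have h2 := (low_deg hv hμb hres c γ hlew (hasseDeriv s Q) hne
      (roots_lt hv b c γ hc (hasseDeriv s Q) hne hdeg)).1
    rwa [map_hasseDeriv] at h2
  constructor
  · -- μ Q = w(Q) → IsEpsilon
    intro hQW
    obtain ⟨s₁, hs₁, hd₁, heq₁⟩ := eps_w_exists hv c γ (Q.map φ) hQmapne hQeval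
    have hd₁' : hasseDeriv s₁ Q ≠ 0 := by
      intro h0
      apply hd₁
      rw [← map_hasseDeriv, h0, Polynomial.map_zero]
    constructor
    · intro s hs hne
      rw [hQW]
      calc monoVal v c γ (Q.map φ) ≤ ((s • γ : Λ) : WithTop Λ)
            + monoVal v c γ (hasseDeriv s (Q.map φ)) := eps_w_le hv c γ _ s
        _ = ((s • γ : Λ) : WithTop Λ) + μ (hasseDeriv s Q) := by rw [hder s hs hne]
    · exact ⟨s₁, hs₁, hd₁', by rw [hQW, heq₁, hder s₁ hs₁ hd₁']⟩
  · -- IsEpsilon → μ Q = w(Q)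
    rintro ⟨hub, s₀, hs₀, hd₀, heq₀⟩
    obtain ⟨s₁, hs₁, hd₁, heq₁⟩ := eps_w_exists hv c γ (Q.map φ) hQmapne hQeval
    have hd₁' : hasseDeriv s₁ Q ≠ 0 := by
      intro h0
      apply hd₁
      rw [← map_hasseDeriv, h0, Polynomial.map_zero]
    refine le_antisymm ?_ ?_
    · -- μ Q ≤ w Q
      calc μ Q ≤ ((s₁ • γ : Λ) : WithTop Λ) + μ (hasseDeriv s₁ Q) := hub s₁ hs₁ hd₁'
        _ = ((s₁ • γ : Λ) : WithTop Λ) + monoVal v c γ (hasseDeriv s₁ (Q.map φ)) := by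
            rw [hder s₁ hs₁ hd₁']
        _ = monoVal v c γ (Q.map φ) := heq₁.symm
    · -- w Q ≤ μ Q
      calc monoVal v c γ (Q.map φ) ≤ ((s₀ • γ : Λ) : WithTop Λ)
            + monoVal v c γ (hasseDeriv s₀ (Q.map φ)) := eps_w_le hv c γ _ s₀
        _ = ((s₀ • γ : Λ) : WithTop Λ) + μ (hasseDeriv s₀ Q) := by rw [hder s₀ hs₀ hd₀]
        _ = μ Q := heq₀.symm

end Step1

section InfLemmas

lemma inf_range_succ_eq (F : ℕ → WithTop Λ) (N : ℕ) :
    (Finset.range (N + 1)).inf F = min (F 0) ((Finset.range N).inf (fun j => F (j + 1))) := by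
  induction N with
  | zero => simp
  | succ N ih =>
    rw [Finset.range_add_one, Finset.inf_insert, ih, Finset.range_add_one, Finset.inf_insert]
    rw [min_left_comm]

lemma inf_range_of_top (F : ℕ → WithTop Λ) (M N : ℕ) (h : M ≤ N)
    (htop : ∀ i, M < i → F i = ⊤) :
    (Finset.range (N + 1)).inf F = (Finset.range (M + 1)).inf F := by
  induction N with
  | zero =>
    have hM : M = 0 := by omega
    rw [hM]
  | succ N ih =>
    rcases Nat.lt_or_ge M (N + 1) with hlt | hge
    · rw [Finset.range_add_one, Finset.inf_insert, htop (N + 1) (by omega)]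
      rw [top_inf_eq]
      exact ih (by omega)
    · have : M = N + 1 := by omega
      rw [this]

lemma inf_add_left {ι : Type*} (s : Finset ι) (e : WithTop Λ) (H : ι → WithTop Λ) :
    s.inf (fun j => e + H j) = e + s.inf H := by
  rcases Finset.eq_empty_or_nonempty s with rfl | hne
  · simp
  refine le_antisymm ?_ ?_
  · obtain ⟨j₀, hj₀, hinf⟩ := Finset.exists_mem_eq_inf s hne H
    rw [hinf]
    exact Finset.inf_le hj₀
  · exact Finset.le_inf fun j hj => add_le_add_right (Finset.inf_le hj) e

end InfLemmas

section QExpand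
variable {μ : Polynomial K → WithTop Λ} {v : AlgebraicClosure K → WithTop Λ}
  (hμ : IsValOnPoly v μ) {Q : Polynomial K} (hQm : Q.Monic) (hQn : 1 ≤ Q.natDegree)

lemma qExpand_zero_poly : ∀ i, qExpand Q 0 i = 0 := by
  intro i
  induction i with
  | zero => simp [qExpand, Polynomial.zero_modByMonic]
  | succ i ih => rw [qExpand, Polynomial.zero_divByMonic]; exact ih

include hQm hQn in
lemma qExpand_eq_zero : ∀ (i : ℕ) (g : Polynomial K), g.natDegree + 1 ≤ i → qExpand Q g i = 0 := by
  intro i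
  induction i with
  | zero => omega
  | succ i ih =>
    intro g hg
    rw [qExpand]
    rcases eq_or_ne (g /ₘ Q) 0 with h0 | h0
    · rw [h0]; exact qExpand_zero_poly _
    · refine ih _ ?_
      have hd : (g /ₘ Q).natDegree = g.natDegree - Q.natDegree :=
        Polynomial.natDegree_divByMonic g hQm
      have hgd : ¬ (g.degree < Q.degree) := fun hlt =>
        h0 ((Polynomial.divByMonic_eq_zero_iff hQm).mpr hlt)
      have hgn : Q.natDegree ≤ g.natDegree := by
        by_contra hcon
        exact hgd (Polynomial.degree_lt_degree (by omega))
      omega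

include hμ in
lemma mu_zero : μ (0 : Polynomial K) = ⊤ := (hμ.eq_top_iff 0).mpr rfl

include hμ in
lemma mu_one : μ (1 : Polynomial K) = 0 :=
  val_one_of_ne_top hμ.map_mul (by rw [ne_eq, hμ.eq_top_iff]; exact one_ne_zero)

end QExpand

section Trunc
variable {μ : Polynomial K → WithTop Λ} {v : AlgebraicClosure K → WithTop Λ}
  (hμ : IsValOnPoly v μ) {Q : Polynomial K} (hQm : Q.Monic) (hQn : 1 ≤ Q.natDegree)

include hμ in
lemma trunc_zero : truncVal μ Q 0 = ⊤ := by
  unfold truncVal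
  simp [qExpand, Polynomial.zero_modByMonic, mu_zero hμ]

include hμ hQm hQn in
lemma trunc_low (f : Polynomial K) (hdeg : f.natDegree < Q.natDegree) :
    truncVal μ Q f = μ f := by
  unfold truncVal
  have hdiv0 : f /ₘ Q = 0 :=
    (Polynomial.divByMonic_eq_zero_iff hQm).mpr (Polynomial.degree_lt_degree hdeg)
  have htop : ∀ i, 0 < i → μ (qExpand Q f i * Q ^ i) = ⊤ := by
    intro i hi
    obtain ⟨j, rfl⟩ := Nat.exists_eq_succ_of_ne_zero (by omega : i ≠ 0)
    have : qExpand Q f (j + 1) = 0 := by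
      show qExpand Q (f /ₘ Q) j = 0
      rw [hdiv0]
      exact qExpand_zero_poly j
    rw [this, zero_mul, mu_zero hμ]
  rw [inf_range_of_top _ 0 f.natDegree (Nat.zero_le _) htop]
  have h0 : qExpand Q f 0 = f := by
    show f %ₘ Q = f
    exact (Polynomial.modByMonic_eq_self_iff hQm).mpr (Polynomial.degree_lt_degree hdeg)
  simp [h0]

include hμ hQm hQn in
lemma trunc_rec (f : Polynomial K) (hge : Q.natDegree ≤ f.natDegree) :
    truncVal μ Q f = min (μ (f %ₘ Q)) (μ Q + truncVal μ Q (f /ₘ Q)) := by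
  have hd1 : 1 ≤ f.natDegree := le_trans hQn hge
  have hdg : (f /ₘ Q).natDegree = f.natDegree - Q.natDegree :=
    Polynomial.natDegree_divByMonic f hQm
  unfold truncVal
  rw [inf_range_succ_eq]
  have hG0 : μ (qExpand Q f 0 * Q ^ 0) = μ (f %ₘ Q) := by
    show μ (f %ₘ Q * Q ^ 0) = μ (f %ₘ Q)
    rw [pow_zero, mul_one]
  rw [hG0]
  congr 1
  have hstep : (fun j => μ (qExpand Q f (j + 1) * Q ^ (j + 1)))
      = fun j => μ Q + μ (qExpand Q (f /ₘ Q) j * Q ^ j) := by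
    funext j
    show μ (qExpand Q (f /ₘ Q) j * Q ^ (j + 1)) = _
    rw [pow_succ, show qExpand Q (f /ₘ Q) j * (Q ^ j * Q) = Q * (qExpand Q (f /ₘ Q) j * Q ^ j)
      from by ring, hμ.map_mul]
  rw [hstep, inf_add_left]
  congr 1
  have hNform : f.natDegree = (f.natDegree - 1) + 1 := by omega
  have htop : ∀ i, (f /ₘ Q).natDegree < i → μ (qExpand Q (f /ₘ Q) i * Q ^ i) = ⊤ := by
    intro i hi
    rw [qExpand_eq_zero hQm hQn i _ (by omega), zero_mul, mu_zero hμ]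
  calc (Finset.range f.natDegree).inf (fun j => μ (qExpand Q (f /ₘ Q) j * Q ^ j))
      = (Finset.range ((f.natDegree - 1) + 1)).inf (fun j => μ (qExpand Q (f /ₘ Q) j * Q ^ j)) := by
        rw [← hNform]
    _ = (Finset.range ((f /ₘ Q).natDegree + 1)).inf (fun j => μ (qExpand Q (f /ₘ Q) j * Q ^ j)) :=
        inf_range_of_top _ _ _ (by omega) htop

include hμ hQm hQn in
lemma trunc_Q : truncVal μ Q Q = μ Q := by
  rw [trunc_rec hμ hQm hQn Q le_rfl]
  have h1 : Q %ₘ Q = 0 := (Polynomial.modByMonic_eq_zero_iff_dvd hQm).mpr dvd_rfl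
  have h2 : Q /ₘ Q = 1 := by
    have h3 := Polynomial.modByMonic_add_div Q Q
    rw [h1, zero_add] at h3
    have h4 : Q * (Q /ₘ Q) = Q * 1 := by rw [mul_one]; exact h3
    exact mul_left_cancel₀ hQm.ne_zero h4
  rw [h1, h2, mu_zero hμ, trunc_low hμ hQm hQn 1 (by simp [Polynomial.natDegree_one]; omega),
    mu_one hμ, add_zero]
  exact min_eq_right le_top

end Trunc

section Main
variable {v : AlgebraicClosure K → WithTop Λ} (hv : IsValOnField v)
  {μ : Polynomial K → WithTop Λ} (hμ : IsValOnPoly v μ)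
  {μb : Polynomial (AlgebraicClosure K) → WithTop Λ} (hμb : IsValOnPolyBar v μb)
  (hres : resK μb = μ)
  (b c : AlgebraicClosure K) (γ : Λ)

local notation "φ" => algebraMap K (AlgebraicClosure K)

include hv hμ hμb hres

lemma main_ind (hlew : ∀ h, monoVal v c γ h ≤ μb h) (hc : c ∈ MinK K (cBall v b γ))
    (hQW : μ (minpoly K c) = monoVal v c γ ((minpoly K c).map φ)) :
    ∀ (N : ℕ) (f : Polynomial K), f.natDegree ≤ N →
      truncVal μ (minpoly K c) f = monoVal v c γ (f.map φ) := by
  have hint : IsIntegral K c := Algebra.IsIntegral.isIntegral c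
  set Q := minpoly K c with hQdef
  have hQm : Q.Monic := minpoly.monic hint
  have hQn : 1 ≤ Q.natDegree := minpoly.natDegree_pos hint
  have hQeval : eval c (Q.map φ) = 0 := by
    rw [Polynomial.eval_map, ← Polynomial.aeval_def]
    exact minpoly.aeval K c
  have hwmul := monoVal_mul γ c hv
  have hwmin := monoVal_add γ c hv
  have hwone := monoVal_one γ c hv
  intro N
  induction N using Nat.strong_induction_on with
  | _ N IH =>
    intro f hfN
    rcases eq_or_ne f 0 with rfl | hf0
    · rw [trunc_zero hμ, Polynomial.map_zero,
        (monoVal_eq_top_iff γ c hv (0 : Polynomial (AlgebraicClosure K))).mpr rfl]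
    rcases lt_or_ge f.natDegree Q.natDegree with hlow | hhigh
    · rw [trunc_low hμ hQm hQn f hlow]
      exact (low_deg hv hμb hres c γ hlew f hf0
        (roots_lt hv b c γ hc f hf0 hlow)).1
    · -- main case
      have hg0 : f /ₘ Q ≠ 0 := by
        rw [Ne, Polynomial.divByMonic_eq_zero_iff hQm]
        intro hlt
        have := Polynomial.natDegree_lt_natDegree hf0 hlt
        omega
      have hdg : (f /ₘ Q).natDegree = f.natDegree - Q.natDegree :=
        Polynomial.natDegree_divByMonic f hQm
      have hN1 : 1 ≤ N := by
        have := le_trans hQn hhigh; omega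
      have hTg : truncVal μ Q (f /ₘ Q) = monoVal v c γ ((f /ₘ Q).map φ) :=
        IH (N - 1) (by omega) (f /ₘ Q) (by omega)
      have hrec := trunc_rec hμ hQm hQn f hhigh
      have hsum : f %ₘ Q + Q * (f /ₘ Q) = f := Polynomial.modByMonic_add_div f Q
      have hWmul : monoVal v c γ ((Q * (f /ₘ Q)).map φ)
          = monoVal v c γ (Q.map φ) + monoVal v c γ ((f /ₘ Q).map φ) := by
        rw [Polynomial.map_mul, hwmul]
      have hmapsum : (f %ₘ Q).map φ + (Q * (f /ₘ Q)).map φ = f.map φ := by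
        rw [← Polynomial.map_add, hsum]
      have hlb : min (monoVal v c γ ((f %ₘ Q).map φ)) (monoVal v c γ ((Q * (f /ₘ Q)).map φ))
          ≤ monoVal v c γ (f.map φ) := by
        rw [← hmapsum]; exact hwmin _ _
      have hub : monoVal v c γ (f.map φ) ≤ v (eval c (f.map φ)) := monoVal_le_eval γ c hv _
      have hev : eval c (f.map φ) = eval c ((f %ₘ Q).map φ) := by
        conv_lhs => rw [← hmapsum]
        rw [eval_add, Polynomial.map_mul, eval_mul, hQeval, zero_mul, add_zero]
      rcases eq_or_ne (f %ₘ Q) 0 with h00 | h00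
      · -- f = Q * (f /ₘ Q)
        have hfQg : f.map φ = (Q * (f /ₘ Q)).map φ := by
          rw [← hmapsum, h00, Polynomial.map_zero, zero_add]
        rw [hrec, h00, mu_zero hμ, hTg, hQW, min_eq_right le_top, hfQg, hWmul]
      · -- f %ₘ Q ≠ 0
        have hf₀deg : (f %ₘ Q).natDegree < Q.natDegree := by
          refine Polynomial.natDegree_lt_natDegree h00 ?_
          exact Polynomial.degree_modByMonic_lt f hQm
        have hWf₀ := low_deg hv hμb hres c γ hlew (f %ₘ Q) h00
          (roots_lt hv b c γ hc (f %ₘ Q) h00 hf₀deg)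
        have hWff₀ : monoVal v c γ (f.map φ) ≤ monoVal v c γ ((f %ₘ Q).map φ) := by
          rw [hWf₀.2]
          rw [← hev]
          exact hub
        rw [hrec, hTg, hQW, hWf₀.1]
        rcases le_or_gt (monoVal v c γ ((f %ₘ Q).map φ))
            (monoVal v c γ (Q.map φ) + monoVal v c γ ((f /ₘ Q).map φ)) with hcase | hcase
        · rw [min_eq_left hcase]
          refine le_antisymm ?_ hWff₀
          refine le_trans (le_min le_rfl ?_) hlb
          rw [hWmul]
          exact hcase
        · rw [min_eq_right hcase.le]
          have hstrict : monoVal v c γ ((Q * (f /ₘ Q)).map φ)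
              < monoVal v c γ ((f %ₘ Q).map φ) := by
            rw [hWmul]; exact hcase
          have := val_add_eq_left hwmul hwmin hwone hstrict
          rw [show (Q * (f /ₘ Q)).map φ + (f %ₘ Q).map φ = f.map φ from by
            rw [add_comm]; exact hmapsum] at this
          rw [this, hWmul]

end Main

end OptBall
open OptBall

/-- μ-optimal balls: let `μ̄` extend `μ`, `(b,γ)` with `v_{b,γ} ≤ μ̄`, and
`B = B(b,γ)`. Then: there exists `c ∈ Min_K B` with `res_K(v_{b,γ}) = μ_Q` for `Q = p_K(c)` iff
there exists `c ∈ Min_K B` with `ε_μ(Q) = γ` for `Q = p_K(c)`. -/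
theorem optimalBallEquiv
    (v : AlgebraicClosure K → WithTop Λ) (hv : IsValOnField v)
    (hdiv : IsDivisible Λ)
    (μ : Polynomial K → WithTop Λ) (hμ : IsValOnPoly v μ)
    (μb : Polynomial (AlgebraicClosure K) → WithTop Λ)
    (hμb : IsValOnPolyBar v μb) (hres : resK μb = μ)
    (b : AlgebraicClosure K) (γ : Λ)
    (hle : valLE (monoVal v b γ) μb) :
    (∃ c ∈ MinK K (cBall v b γ),
        resK (monoVal v b γ) = truncVal μ (minpoly K c)) ↔
      ∃ c ∈ MinK K (cBall v b γ), IsEpsilon μ (minpoly K c) γ := by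
  classical
  suffices h : ∀ c ∈ MinK K (cBall v b γ),
      (resK (monoVal v b γ) = truncVal μ (minpoly K c) ↔ IsEpsilon μ (minpoly K c) γ) by
    constructor
    · rintro ⟨c, hc, he⟩; exact ⟨c, hc, (h c hc).mp he⟩
    · rintro ⟨c, hc, he⟩; exact ⟨c, hc, (h c hc).mpr he⟩
  intro c hc
  have hint : IsIntegral K c := Algebra.IsIntegral.isIntegral c
  have hQm : (minpoly K c).Monic := minpoly.monic hint
  have hQn : 1 ≤ (minpoly K c).natDegree := minpoly.natDegree_pos hint
  have hcball : (γ : WithTop Λ) ≤ v (c - b) := hc.1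
  have hbc : (γ : WithTop Λ) ≤ v (b - c) := by rwa [v_sub_comm hv]
  have htrans : monoVal v b γ = monoVal v c γ := monoVal_translate hv hbc
  have hlew : ∀ h, monoVal v c γ h ≤ μb h := fun h => htrans ▸ hle h
  rw [← eps_iff_WQ hv hμb hres b c γ hlew hc]
  constructor
  · intro he
    have h2 := congrFun he (minpoly K c)
    rw [trunc_Q hμ hQm hQn] at h2
    rw [← h2]
    show monoVal v b γ _ = monoVal v c γ _
    rw [htrans]
  · intro hQW
    funext f
    show monoVal v b γ (f.map (algebraMap K (AlgebraicClosure K))) = truncVal μ (minpoly K c) f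
    rw [htrans]
    exact (main_ind hv hμ hμb hres b c γ hlew hc hQW f.natDegree f le_rfl).symm
end
end

section
/- Let μ = res_K(v_{a,δ}) for some (a,δ) ∈ K̄×Λ, and let m ∈ ℕ. Then for every closed ball B ⊆ K̄ with B ⊇ B(a,δ) and deg_K B = m, there exists a closed ball B' = B(b',γ') with B ⊇ B' ⊇ B(a,δ), deg_K B' = m, and such that B' is μ-optimal, i.e., ε_μ(p_K(c)) = γ' for some c ∈ Min_K B'. (In other words, the μ-optimal balls of degree m are cofinal, with respect to descending inclusion, among all closed balls of degree m containing B(a,δ).) -/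
open Polynomial

noncomputable section

variable {K Λ : Type*} [Field K] [AddCommGroup Λ] [LinearOrder Λ] [IsOrderedAddMonoid Λ]

namespace OBCaux
set_option linter.unusedSectionVars false
set_option linter.unusedVariables false

variable {v : AlgebraicClosure K → WithTop Λ}

lemma v_zero (hv : IsValOnField v) : v 0 = ⊤ := (hv.eq_top_iff 0).2 rfl

lemma v_one (hv : IsValOnField v) : v 1 = 0 := by
  have h := hv.map_mul 1 1
  rw [one_mul] at h
  have h1 : v 1 ≠ ⊤ := fun ht => one_ne_zero ((hv.eq_top_iff 1).1 ht)
  rcases (WithTop.ne_top_iff_exists).1 h1 with ⟨x, hx⟩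
  rw [← hx, ← WithTop.coe_add, eq_comm, WithTop.coe_eq_coe] at h
  have hx0 : x = 0 := by
    have h' : x + x = x + 0 := by rw [add_zero]; exact h
    exact (add_left_cancel h').symm ▸ rfl
  rw [← hx, hx0]; rfl

lemma v_neg (hv : IsValOnField v) (x : AlgebraicClosure K) : v (-x) = v x := by
  have hm : v (-1 : AlgebraicClosure K) = 0 := by
    have h := hv.map_mul (-1) (-1)
    rw [neg_mul_neg, one_mul, v_one hv] at h
    have h1 : v (-1 : AlgebraicClosure K) ≠ ⊤ := fun ht => by
      have := (hv.eq_top_iff (-1)).1 ht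
      exact one_ne_zero (neg_eq_zero.1 this)
    rcases (WithTop.ne_top_iff_exists).1 h1 with ⟨y, hy⟩
    rw [← hy, ← WithTop.coe_add, eq_comm, WithTop.coe_eq_zero] at h
    have hy0 : y = 0 := by
      rcases lt_trichotomy y 0 with hy0 | hy0 | hy0
      · have := add_lt_add hy0 hy0; rw [add_zero, h] at this; exact absurd this (lt_irrefl 0)
      · exact hy0
      · have := add_lt_add hy0 hy0; rw [add_zero, h] at this; exact absurd this (lt_irrefl 0)
    rw [← hy, hy0]; rfl
  have := hv.map_mul (-1) x
  rw [neg_one_mul, hm, zero_add] at this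
  exact this

lemma v_sub_comm (hv : IsValOnField v) (x y : AlgebraicClosure K) : v (x - y) = v (y - x) := by
  rw [← v_neg hv (x - y), neg_sub]

lemma v_add_eq_left (hv : IsValOnField v) {x y : AlgebraicClosure K} (h : v x < v y) :
    v (x + y) = v x := by
  have h1 : v x ≤ v (x + y) := by
    have := hv.min_le_add x y
    rwa [min_eq_left h.le] at this
  rcases h1.lt_or_eq with hlt | heq
  · exfalso
    have h2 := hv.min_le_add (x + y) (-y)
    rw [add_neg_cancel_right, v_neg hv] at h2
    have : v x < min (v (x + y)) (v y) := lt_min hlt h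
    exact absurd h2 (not_le.2 this)
  · exact heq.symm

/-- ultrametric triangle for differences: `v (x - z) ≥ min (v (x-y)) (v (y-z))`. -/
lemma v_sub_trans (hv : IsValOnField v) (x y z : AlgebraicClosure K) :
    min (v (x - y)) (v (y - z)) ≤ v (x - z) := by
  have := hv.min_le_add (x - y) (y - z)
  rwa [sub_add_sub_cancel] at this


variable (a : AlgebraicClosure K) (δ : Λ)

lemma nu_le_term (hv : IsValOnField v) (f : Polynomial (AlgebraicClosure K)) (k : ℕ) :
    monoVal v a δ f ≤ v ((taylor a f).coeff k) + ((k • δ : Λ) : WithTop Λ) := by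
  rcases le_or_gt k f.natDegree with hk | hk
  · exact Finset.inf_le (Finset.mem_range.2 (Nat.lt_succ_of_le hk))
  · have : (taylor a f).coeff k = 0 :=
      coeff_eq_zero_of_natDegree_lt (by rwa [natDegree_taylor])
    rw [this, v_zero hv, top_add]
    exact le_top

lemma le_nu (f : Polynomial (AlgebraicClosure K)) (x : WithTop Λ)
    (h : ∀ k, x ≤ v ((taylor a f).coeff k) + ((k • δ : Λ) : WithTop Λ)) :
    x ≤ monoVal v a δ f :=
  Finset.le_inf fun k _ => h k

lemma nu_zero (hv : IsValOnField v) : monoVal v a δ (0 : Polynomial (AlgebraicClosure K)) = ⊤ := by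
  simp [monoVal, v_zero hv]

lemma nu_ne_top (hv : IsValOnField v) {f : Polynomial (AlgebraicClosure K)} (hf : f ≠ 0) :
    monoVal v a δ f ≠ ⊤ := by
  have htay : taylor a f ≠ 0 := fun h => hf (by
    apply taylor_injective a; simpa using h)
  have hlc : (taylor a f).coeff f.natDegree ≠ 0 := by
    rw [← natDegree_taylor f a]
    exact fun h => htay (leadingCoeff_eq_zero.1 h)
  have hv' : v ((taylor a f).coeff f.natDegree) ≠ ⊤ := fun h => hlc ((hv.eq_top_iff _).1 h)
  intro htop
  have := nu_le_term a δ hv f f.natDegree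
  rw [htop, top_le_iff] at this
  exact (WithTop.add_ne_top.2 ⟨hv', WithTop.coe_ne_top⟩) this

lemma nu_eq_top_iff (hv : IsValOnField v) (f : Polynomial (AlgebraicClosure K)) :
    monoVal v a δ f = ⊤ ↔ f = 0 := by
  constructor
  · intro h; by_contra hf; exact nu_ne_top a δ hv hf h
  · rintro rfl; exact nu_zero a δ hv

lemma nu_neg (hv : IsValOnField v) (f : Polynomial (AlgebraicClosure K)) :
    monoVal v a δ (-f) = monoVal v a δ f := by
  simp [monoVal, natDegree_neg, map_neg, v_neg hv]

lemma nu_min_le_add (hv : IsValOnField v) (f g : Polynomial (AlgebraicClosure K)) :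
    min (monoVal v a δ f) (monoVal v a δ g) ≤ monoVal v a δ (f + g) := by
  apply le_nu
  intro k
  have hco : (taylor a (f + g)).coeff k = (taylor a f).coeff k + (taylor a g).coeff k := by
    rw [map_add, coeff_add]
  rw [hco]
  calc min (monoVal v a δ f) (monoVal v a δ g)
      ≤ min (v ((taylor a f).coeff k) + ((k • δ : Λ) : WithTop Λ))
          (v ((taylor a g).coeff k) + ((k • δ : Λ) : WithTop Λ)) :=
        min_le_min (nu_le_term a δ hv f k) (nu_le_term a δ hv g k)
    _ = min (v ((taylor a f).coeff k)) (v ((taylor a g).coeff k)) + ((k • δ : Λ) : WithTop Λ) :=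
        min_add_add_right _ _ _
    _ ≤ _ := add_le_add_left (hv.min_le_add _ _) _

lemma nu_add_eq_left (hv : IsValOnField v) {f g : Polynomial (AlgebraicClosure K)}
    (h : monoVal v a δ f < monoVal v a δ g) :
    monoVal v a δ (f + g) = monoVal v a δ f := by
  have h1 : monoVal v a δ f ≤ monoVal v a δ (f + g) := by
    have := nu_min_le_add a δ hv f g
    rwa [min_eq_left h.le] at this
  rcases h1.lt_or_eq with hlt | heq
  · exfalso
    have h2 := nu_min_le_add a δ hv (f + g) (-g)
    rw [add_neg_cancel_right, nu_neg a δ hv] at h2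
    exact absurd h2 (not_le.2 (lt_min hlt h))
  · exact heq.symm

lemma nu_one (hv : IsValOnField v) : monoVal v a δ (1 : Polynomial (AlgebraicClosure K)) = 0 := by
  simp [monoVal, v_one hv]


/-- coercion of successor smul -/
lemma coe_succ_smul (k : ℕ) : (((k + 1) • δ : Λ) : WithTop Λ) = ((k • δ : Λ) : WithTop Λ) + (δ : WithTop Λ) := by
  rw [succ_nsmul]; exact_mod_cast rfl

lemma nu_linear_mul (hv : IsValOnField v) (c : AlgebraicClosure K)
    (h : Polynomial (AlgebraicClosure K)) :
    monoVal v a δ ((X - C c) * h) =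
      min (v (a - c)) (δ : WithTop Λ) + monoVal v a δ h := by
  by_cases h0 : h = 0
  · rw [h0, mul_zero, nu_zero a δ hv, add_top]
  set e : AlgebraicClosure K := a - c with he
  set H : Polynomial (AlgebraicClosure K) := taylor a h with hH
  have htay : taylor a ((X - C c) * h) = (X + C e) * H := by
    rw [taylor_mul]
    congr 1
    rw [map_sub, taylor_X, taylor_C, he, map_sub C a c]
    ring
  -- coefficients of the product
  have hco0 : ((X + C e) * H).coeff 0 = e * H.coeff 0 := by
    rw [mul_coeff_zero]; simp
  have hcoS : ∀ n : ℕ, ((X + C e) * H).coeff (n + 1) = H.coeff n + e * H.coeff (n + 1) := by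
    intro n
    rw [add_mul, coeff_add, coeff_X_mul, coeff_C_mul]
  -- the term function for h
  set T : ℕ → WithTop Λ := fun k => v (H.coeff k) + ((k • δ : Λ) : WithTop Λ) with hT
  set w : WithTop Λ := monoVal v a δ h with hw
  have hwle : ∀ k, w ≤ T k := fun k => nu_le_term a δ hv h k
  have hwtop : w ≠ ⊤ := nu_ne_top a δ hv h0
  -- LHS term function
  have hterm : ∀ n, monoVal v a δ ((X - C c) * h) ≤
      v (((X + C e) * H).coeff n) + ((n • δ : Λ) : WithTop Λ) := by
    intro n
    have := nu_le_term a δ hv ((X - C c) * h) n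
    rwa [htay] at this
  -- ≥ direction
  have hge : min (v e) (δ : WithTop Λ) + w ≤ monoVal v a δ ((X - C c) * h) := by
    apply le_nu
    intro n
    rw [htay]
    match n with
    | 0 =>
      rw [hco0, hv.map_mul]
      calc min (v e) (δ : WithTop Λ) + w ≤ v e + w :=
            add_le_add_left (min_le_left _ _) _
        _ ≤ v e + T 0 := add_le_add_right (hwle 0) _
        _ = v e + v (H.coeff 0) + ((0 • δ : Λ) : WithTop Λ) := by
            rw [hT]; simp [add_assoc]
    | Nat.succ k =>
      rw [hcoS k]
      have B1 : min (v e) (δ : WithTop Λ) + w ≤ v (H.coeff k) + (((k+1) • δ : Λ) : WithTop Λ) := by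
        calc min (v e) (δ : WithTop Λ) + w ≤ (δ : WithTop Λ) + w :=
              add_le_add_left (min_le_right _ _) _
          _ = w + (δ : WithTop Λ) := add_comm _ _
          _ ≤ T k + (δ : WithTop Λ) := add_le_add_left (hwle k) _
          _ = v (H.coeff k) + (((k+1) • δ : Λ) : WithTop Λ) := by
              rw [coe_succ_smul, hT, add_assoc]
      have B2 : min (v e) (δ : WithTop Λ) + w ≤ v (e * H.coeff (k+1)) + (((k+1) • δ : Λ) : WithTop Λ) := by
        rw [hv.map_mul]
        calc min (v e) (δ : WithTop Λ) + w ≤ v e + w :=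
              add_le_add_left (min_le_left _ _) _
          _ ≤ v e + T (k+1) := add_le_add_right (hwle (k+1)) _
          _ = v e + v (H.coeff (k+1)) + (((k+1) • δ : Λ) : WithTop Λ) := by
              rw [hT, add_assoc]
      calc min (v e) (δ : WithTop Λ) + w
          ≤ (v (H.coeff k) + (((k+1) • δ : Λ) : WithTop Λ)) ⊓
            (v (e * H.coeff (k+1)) + (((k+1) • δ : Λ) : WithTop Λ)) := le_min B1 B2
        _ = (v (H.coeff k) ⊓ v (e * H.coeff (k+1))) + (((k+1) • δ : Λ) : WithTop Λ) :=
            min_add_add_right _ _ _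
        _ ≤ v (H.coeff k + e * H.coeff (k+1)) + (((k+1) • δ : Λ) : WithTop Λ) :=
            add_le_add_left (hv.min_le_add _ _) _
  -- ≤ direction
  have hle : monoVal v a δ ((X - C c) * h) ≤ min (v e) (δ : WithTop Λ) + w := by
    -- achiever set
    set R : Finset ℕ := Finset.range (h.natDegree + 1) with hR
    have hinf : w = R.inf T := by rw [hw, hR, hT]; rfl
    have hRne : R.Nonempty := ⟨0, Finset.mem_range.2 (Nat.succ_pos _)⟩
    set S : Finset ℕ := R.filter (fun k => T k = w) with hS
    have hSne : S.Nonempty := by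
      obtain ⟨i, hiR, hieq⟩ := Finset.exists_mem_eq_inf R hRne T
      exact ⟨i, Finset.mem_filter.2 ⟨hiR, by rw [← hieq, hinf]⟩⟩
    have hTS : ∀ k ∈ S, T k = w := fun k hk => (Finset.mem_filter.1 hk).2
    have hstrict : ∀ k, k ∉ S → w < T k := by
      intro k hk
      rcases le_or_gt k h.natDegree with hkd | hkd
      · have hkR : k ∈ R := Finset.mem_range.2 (Nat.lt_succ_of_le hkd)
        have : T k ≠ w := fun hh => hk (Finset.mem_filter.2 ⟨hkR, hh⟩)
        exact lt_of_le_of_ne (hwle k) (Ne.symm this)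
      · have : H.coeff k = 0 := coeff_eq_zero_of_natDegree_lt (by rw [hH, natDegree_taylor]; exact hkd)
        rw [hT]; simp only [this, v_zero hv, top_add]
        exact lt_of_le_of_ne le_top hwtop
    rcases le_or_gt (δ : WithTop Λ) (v e) with hcase | hcase
    · -- v e ≥ δ : use largest achiever i, term at i+1
      rw [min_eq_right hcase]
      obtain ⟨i, hiS, hmax⟩ : ∃ i ∈ S, ∀ k ∈ S, k ≤ i :=
        ⟨S.max' hSne, S.max'_mem hSne, fun k hk => S.le_max' k hk⟩
      have hieq : T i = w := hTS i hiS
      have hnext : w < T (i + 1) := by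
        apply hstrict
        intro hmem
        exact absurd (hmax _ hmem) (by omega)
      -- strict comparison: v (H.coeff i) < v (e * H.coeff (i+1))
      have hAB : v (H.coeff i) < v (e * H.coeff (i + 1)) := by
        have key : v (H.coeff i) + (((i+1) • δ : Λ) : WithTop Λ) <
            v (e * H.coeff (i + 1)) + (((i+1) • δ : Λ) : WithTop Λ) := by
          have hL : v (H.coeff i) + (((i+1) • δ : Λ) : WithTop Λ) = w + (δ : WithTop Λ) := by
            rw [coe_succ_smul, ← add_assoc]
            show T i + (δ : WithTop Λ) = w + (δ : WithTop Λ)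
            rw [hieq]
          have hRgt : w + (δ : WithTop Λ) < v (e * H.coeff (i + 1)) + (((i+1) • δ : Λ) : WithTop Λ) := by
            rw [hv.map_mul, add_assoc]
            calc w + (δ : WithTop Λ) = (δ : WithTop Λ) + w := add_comm _ _
              _ < (δ : WithTop Λ) + T (i+1) :=
                  WithTop.add_lt_add_left WithTop.coe_ne_top hnext
              _ ≤ v e + T (i+1) := add_le_add_left hcase _
              _ = v e + (v (H.coeff (i+1)) + (((i+1) • δ : Λ) : WithTop Λ)) := by rw [hT]
          rw [hL]; exact hRgt
        exact lt_of_add_lt_add_right key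
      have hvc : v (((X + C e) * H).coeff (i + 1)) = v (H.coeff i) := by
        rw [hcoS i]; exact v_add_eq_left hv hAB
      calc monoVal v a δ ((X - C c) * h)
          ≤ v (((X + C e) * H).coeff (i+1)) + (((i+1) • δ : Λ) : WithTop Λ) := hterm (i+1)
        _ = v (H.coeff i) + (((i+1) • δ : Λ) : WithTop Λ) := by rw [hvc]
        _ = T i + (δ : WithTop Λ) := by rw [coe_succ_smul, ← add_assoc, hT]
        _ = (δ : WithTop Λ) + w := by rw [hieq, add_comm]
    · -- v e < δ : use smallest achiever i, term at i
      rw [min_eq_left hcase.le]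
      obtain ⟨i, hiS, hmin⟩ : ∃ i ∈ S, ∀ k ∈ S, i ≤ k :=
        ⟨S.min' hSne, S.min'_mem hSne, fun k hk => S.min'_le k hk⟩
      have hieq : T i = w := hTS i hiS
      match i, hiS, hieq, hmin with
      | 0, hiS, hieq, hmin =>
        have h0eq : T 0 = w := hieq
        calc monoVal v a δ ((X - C c) * h)
            ≤ v (((X + C e) * H).coeff 0) + ((0 • δ : Λ) : WithTop Λ) := hterm 0
          _ = v e + v (H.coeff 0) + ((0 • δ : Λ) : WithTop Λ) := by rw [hco0, hv.map_mul]
          _ = v e + T 0 := by rw [hT]; simp [add_assoc]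
          _ = v e + w := by rw [h0eq]
      | Nat.succ j, hiS, hieq, hmin =>
        have hieq' : T (j+1) = w := hieq
        have hprev : w < T j := by
          apply hstrict
          intro hmem
          have := hmin _ hmem
          omega
        have hAB : v (e * H.coeff (j + 1)) < v (H.coeff j) := by
          have key : v (e * H.coeff (j + 1)) + (((j+1) • δ : Λ) : WithTop Λ) <
              v (H.coeff j) + (((j+1) • δ : Λ) : WithTop Λ) := by
            have hL : v (e * H.coeff (j+1)) + (((j+1) • δ : Λ) : WithTop Λ) = v e + w := by
              rw [hv.map_mul, add_assoc]
              show v e + T (j+1) = v e + w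
              rw [hieq']
            have hR : v (H.coeff j) + (((j+1) • δ : Λ) : WithTop Λ) = T j + (δ : WithTop Λ) := by
              rw [coe_succ_smul, ← add_assoc, hT]
            rw [hL, hR]
            calc v e + w = w + v e := add_comm _ _
              _ < w + (δ : WithTop Λ) := WithTop.add_lt_add_left hwtop hcase
              _ = (δ : WithTop Λ) + w := add_comm _ _
              _ < (δ : WithTop Λ) + T j := WithTop.add_lt_add_left WithTop.coe_ne_top hprev
              _ = T j + (δ : WithTop Λ) := add_comm _ _
          exact lt_of_add_lt_add_right key
        have hvc : v (((X + C e) * H).coeff (j + 1)) = v (e * H.coeff (j+1)) := by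
          rw [hcoS j, add_comm (H.coeff j)]
          exact v_add_eq_left hv hAB
        calc monoVal v a δ ((X - C c) * h)
            ≤ v (((X + C e) * H).coeff (j+1)) + (((j+1) • δ : Λ) : WithTop Λ) := hterm (j+1)
          _ = v (e * H.coeff (j+1)) + (((j+1) • δ : Λ) : WithTop Λ) := by rw [hvc]
          _ = v e + T (j+1) := by rw [hv.map_mul, add_assoc, hT]
          _ = v e + w := by rw [hieq']
  exact le_antisymm hle hge


lemma hd_linear_mul {R : Type*} [CommRing R] (c : R) (h : R[X]) (s : ℕ) :
    hasseDeriv (s + 1) ((X - C c) * h) =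
      (X - C c) * hasseDeriv (s + 1) h + hasseDeriv s h := by
  rw [hasseDeriv_mul]
  rw [Finset.Nat.sum_antidiagonal_eq_sum_range_succ
    (f := fun i j => hasseDeriv i (X - C c) * hasseDeriv j h)]
  rw [Finset.sum_range_succ']
  have h2 : ∀ i, hasseDeriv (i + 1 + 1) (X - C c : R[X]) = 0 := by
    intro i
    rw [map_sub, hasseDeriv_X _ (by omega), hasseDeriv_C _ _ (by omega), sub_zero]
  rw [Finset.sum_range_succ']
  simp only [h2, zero_mul, Finset.sum_const_zero, zero_add]
  rw [hasseDeriv_zero', hasseDeriv_one']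
  have : derivative (X - C c : R[X]) = 1 := by
    rw [derivative_sub, derivative_X, derivative_C, sub_zero]
  rw [this, one_mul]
  have h3 : 1 + s - 0 = 1 + s := by omega
  have h4 : s + 1 - (0 + 1) = s := by omega
  rw [h4]
  ring_nf
  rw [h3]


/-- The inductive invariant: `γ = ε_ν(f)` is witnessed at `s = r`. -/
def Pinv {A : Type*} [CommRing A] (ν : A[X] → WithTop Λ) (f : A[X]) (γ : Λ) (r : ℕ) : Prop :=
  ν f ≠ ⊤ ∧ 1 ≤ r ∧
  (∀ s : ℕ, 1 ≤ s → ν f ≤ ((s • γ : Λ) : WithTop Λ) + ν (hasseDeriv s f)) ∧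
  ν f = ((r • γ : Λ) : WithTop Λ) + ν (hasseDeriv r f) ∧
  (∀ s : ℕ, r < s → ν f < ((s • γ : Λ) : WithTop Λ) + ν (hasseDeriv s f))

lemma aux_lt {G t : WithTop Λ} {x y : Λ} (hG : G ≠ ⊤) (h : G ≤ (x : WithTop Λ) + t)
    (hxy : x < y) : G < (y : WithTop Λ) + t := by
  cases t with
  | top => rw [add_top]; exact lt_top_iff_ne_top.2 hG
  | coe t =>
    refine lt_of_le_of_lt h ?_
    rw [← WithTop.coe_add, ← WithTop.coe_add, WithTop.coe_lt_coe]
    exact add_lt_add_left hxy t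

lemma coe_smul_succ (k : ℕ) (m : Λ) :
    (((k + 1) • m : Λ) : WithTop Λ) = ((k • m : Λ) : WithTop Λ) + (m : WithTop Λ) := by
  rw [succ_nsmul]; exact_mod_cast rfl

lemma Pinv_step {A : Type*} [CommRing A] (ν : A[X] → WithTop Λ)
    (hmla : ∀ f g, min (ν f) (ν g) ≤ ν (f + g))
    (hadd : ∀ f g, ν f < ν g → ν (f + g) = ν f)
    (c : A) {lc γ : Λ} {r : ℕ} {g : A[X]}
    (hlin : ∀ h : A[X], ν ((X - C c) * h) = (lc : WithTop Λ) + ν h)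
    (hg : Pinv ν g γ r) :
    ∃ r' : ℕ, Pinv ν ((X - C c) * g) (max γ lc) r' := by
  obtain ⟨hgtop, hgr1, hg1, hg2, hg3⟩ := hg
  have hval : ν ((X - C c) * g) = (lc : WithTop Λ) + ν g := hlin g
  have hvtop : ν ((X - C c) * g) ≠ ⊤ := by
    rw [hval]; exact WithTop.add_ne_top.2 ⟨WithTop.coe_ne_top, hgtop⟩
  have hDr_ne : ν (hasseDeriv r g) ≠ ⊤ := by
    intro hh; rw [hh, add_top] at hg2; exact hgtop hg2
  have hcompA : ∀ k : ℕ, ν ((X - C c) * hasseDeriv (k + 1) g)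
      = (lc : WithTop Λ) + ν (hasseDeriv (k + 1) g) := fun k => hlin _
  have hmin : ∀ k : ℕ, min ((lc : WithTop Λ) + ν (hasseDeriv (k + 1) g)) (ν (hasseDeriv k g))
      ≤ ν (hasseDeriv (k + 1) ((X - C c) * g)) := by
    intro k
    rw [hd_linear_mul]
    have := hmla ((X - C c) * hasseDeriv (k + 1) g) (hasseDeriv k g)
    rwa [hcompA k] at this
  -- the uniform upper bound (part 1 of the invariant)
  have huniform : ∀ m : Λ, γ ≤ m → lc ≤ m → ∀ s : ℕ, 1 ≤ s →
      ν ((X - C c) * g) ≤ ((s • m : Λ) : WithTop Λ) + ν (hasseDeriv s ((X - C c) * g)) := by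
    intro m hγm hlcm s hs
    match s, hs with
    | Nat.succ k, _ =>
      refine le_trans ?_ (add_le_add_right (hmin k) _)
      rw [← min_add_add_left, le_min_iff]
      constructor
      · -- component A
        have h1 : ν g ≤ (((k + 1) • m : Λ) : WithTop Λ) + ν (hasseDeriv (k + 1) g) := by
          refine le_trans (hg1 (k + 1) (by omega)) (add_le_add_left ?_ _)
          exact_mod_cast nsmul_le_nsmul_right hγm (k + 1)
        calc ν ((X - C c) * g) = (lc : WithTop Λ) + ν g := hval
          _ ≤ (lc : WithTop Λ) + ((((k + 1) • m : Λ) : WithTop Λ) + ν (hasseDeriv (k + 1) g)) :=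
              add_le_add_right h1 _
          _ = (((k + 1) • m : Λ) : WithTop Λ) + ((lc : WithTop Λ) + ν (hasseDeriv (k + 1) g)) :=
              add_left_comm _ _ _
      · -- component B
        match k with
        | 0 =>
          rw [hval, hasseDeriv_zero', one_nsmul]
          exact add_le_add_left (WithTop.coe_le_coe.2 hlcm) _
        | Nat.succ j =>
          have h1 : ν g ≤ (((j + 1) • m : Λ) : WithTop Λ) + ν (hasseDeriv (j + 1) g) := by
            refine le_trans (hg1 (j + 1) (by omega)) (add_le_add_left ?_ _)
            exact_mod_cast nsmul_le_nsmul_right hγm (j + 1)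
          calc ν ((X - C c) * g) = (lc : WithTop Λ) + ν g := hval
            _ ≤ (m : WithTop Λ) + ν g := add_le_add_left (WithTop.coe_le_coe.2 hlcm) _
            _ ≤ (m : WithTop Λ) + ((((j + 1) • m : Λ) : WithTop Λ) + ν (hasseDeriv (j + 1) g)) :=
                add_le_add_right h1 _
            _ = (((j + 2) • m : Λ) : WithTop Λ) + ν (hasseDeriv (j + 1) g) := by
                rw [coe_smul_succ (j + 1) m, add_comm ((((j+1) • m : Λ) : WithTop Λ)) (m : WithTop Λ), add_assoc]
  rcases lt_trichotomy γ lc with hcase | hcase | hcase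
  · -- γ < lc : new factor strictly dominates, r' = 1
    refine ⟨1, ?_⟩
    rw [max_eq_right hcase.le]
    have hD1 : ν (hasseDeriv 1 ((X - C c) * g)) = ν g := by
      have hAB : ν g < ν ((X - C c) * hasseDeriv 1 g) := by
        rw [hlin]
        have h1 := hg1 1 le_rfl
        rw [one_nsmul] at h1
        exact aux_lt hgtop h1 hcase
      have : hasseDeriv (0 + 1) ((X - C c) * g)
          = (X - C c) * hasseDeriv (0 + 1) g + hasseDeriv 0 g := hd_linear_mul c g 0
      rw [hasseDeriv_zero'] at this
      rw [show (1 : ℕ) = 0 + 1 from rfl, this, add_comm]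
      exact hadd _ _ hAB
    refine ⟨hvtop, le_rfl, huniform lc hcase.le le_rfl, ?_, ?_⟩
    · rw [hD1, hval, one_nsmul]
    · intro s hs
      match s, hs with
      | Nat.succ k, hk =>
        have hk1 : 1 ≤ k := by omega
        have cA : ν ((X - C c) * g) < (((k + 1) • lc : Λ) : WithTop Λ)
            + ((lc : WithTop Λ) + ν (hasseDeriv (k + 1) g)) := by
          have h1 : ν g < (((k + 1) • lc : Λ) : WithTop Λ) + ν (hasseDeriv (k + 1) g) :=
            aux_lt hgtop (hg1 (k + 1) (by omega))
              (nsmul_lt_nsmul_right (by omega : k + 1 ≠ 0) hcase)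
          rw [hval, add_left_comm]
          exact WithTop.add_lt_add_left WithTop.coe_ne_top h1
        have cB : ν ((X - C c) * g) < (((k + 1) • lc : Λ) : WithTop Λ)
            + ν (hasseDeriv k g) := by
          have h1 : ν g < ((k • lc : Λ) : WithTop Λ) + ν (hasseDeriv k g) :=
            aux_lt hgtop (hg1 k hk1) (nsmul_lt_nsmul_right (by omega : k ≠ 0) hcase)
          rw [hval, coe_smul_succ, add_comm ((k • lc : Λ) : WithTop Λ) (lc : WithTop Λ), add_assoc]
          exact WithTop.add_lt_add_left WithTop.coe_ne_top h1
        calc ν ((X - C c) * g)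
            < min ((((k + 1) • lc : Λ) : WithTop Λ) + ((lc : WithTop Λ) + ν (hasseDeriv (k + 1) g)))
              ((((k + 1) • lc : Λ) : WithTop Λ) + ν (hasseDeriv k g)) := lt_min cA cB
          _ = (((k + 1) • lc : Λ) : WithTop Λ)
              + min ((lc : WithTop Λ) + ν (hasseDeriv (k + 1) g)) (ν (hasseDeriv k g)) :=
              min_add_add_left _ _ _
          _ ≤ _ := add_le_add_right (hmin k) _
  · -- γ = lc : multiplicity of the maximum goes up, r' = r + 1
    subst hcase
    refine ⟨r + 1, ?_⟩
    rw [max_self]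
    have hBA : ν (hasseDeriv r g) < ν ((X - C c) * hasseDeriv (r + 1) g) := by
      rw [hlin]
      have h3 := hg3 (r + 1) (by omega)
      rw [hg2, coe_smul_succ, add_assoc] at h3
      exact lt_of_add_lt_add_left h3
    have hD : ν (hasseDeriv (r + 1) ((X - C c) * g)) = ν (hasseDeriv r g) := by
      rw [hd_linear_mul, add_comm]
      exact hadd _ _ hBA
    refine ⟨hvtop, by omega, huniform γ le_rfl le_rfl, ?_, ?_⟩
    · rw [hD, hval, hg2, coe_smul_succ, add_comm ((r • γ : Λ) : WithTop Λ) (γ : WithTop Λ), add_assoc]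
    · intro s hs
      match s, hs with
      | Nat.succ k, hk =>
        have hkr : r < k := by omega
        have cA : ν ((X - C c) * g) < (((k + 1) • γ : Λ) : WithTop Λ)
            + ((γ : WithTop Λ) + ν (hasseDeriv (k + 1) g)) := by
          have h1 : ν g < (((k + 1) • γ : Λ) : WithTop Λ) + ν (hasseDeriv (k + 1) g) :=
            hg3 (k + 1) (by omega)
          rw [hval, add_left_comm]
          exact WithTop.add_lt_add_left WithTop.coe_ne_top h1
        have cB : ν ((X - C c) * g) < (((k + 1) • γ : Λ) : WithTop Λ)
            + ν (hasseDeriv k g) := by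
          have h1 : ν g < ((k • γ : Λ) : WithTop Λ) + ν (hasseDeriv k g) := hg3 k hkr
          rw [hval, coe_smul_succ, add_comm ((k • γ : Λ) : WithTop Λ) (γ : WithTop Λ), add_assoc]
          exact WithTop.add_lt_add_left WithTop.coe_ne_top h1
        calc ν ((X - C c) * g)
            < min ((((k + 1) • γ : Λ) : WithTop Λ) + ((γ : WithTop Λ) + ν (hasseDeriv (k + 1) g)))
              ((((k + 1) • γ : Λ) : WithTop Λ) + ν (hasseDeriv k g)) := lt_min cA cB
          _ = (((k + 1) • γ : Λ) : WithTop Λ)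
              + min ((γ : WithTop Λ) + ν (hasseDeriv (k + 1) g)) (ν (hasseDeriv k g)) :=
              min_add_add_left _ _ _
          _ ≤ _ := add_le_add_right (hmin k) _
  · -- lc < γ : old maximum persists, r' = r
    refine ⟨r, ?_⟩
    rw [max_eq_left hcase.le]
    obtain ⟨k, rfl⟩ : ∃ k, r = k + 1 := ⟨r - 1, by omega⟩
    have hupper : (γ : WithTop Λ) + ν (hasseDeriv (k + 1) g) ≤ ν (hasseDeriv k g) := by
      match k with
      | 0 =>
        rw [hasseDeriv_zero', hg2, one_nsmul]
      | Nat.succ j =>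
        have h1 := hg1 (j + 1) (by omega)
        rw [hg2, coe_smul_succ, add_assoc] at h1
        exact (WithTop.add_le_add_iff_left WithTop.coe_ne_top).1 h1
    have hAB : ν ((X - C c) * hasseDeriv (k + 1) g) < ν (hasseDeriv k g) := by
      rw [hlin]
      refine lt_of_lt_of_le ?_ hupper
      exact WithTop.add_lt_add_right hDr_ne (WithTop.coe_lt_coe.2 hcase)
    have hD : ν (hasseDeriv (k + 1) ((X - C c) * g))
        = (lc : WithTop Λ) + ν (hasseDeriv (k + 1) g) := by
      rw [hd_linear_mul, ← hlin (hasseDeriv (k + 1) g)]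
      exact hadd _ _ hAB
    refine ⟨hvtop, by omega, huniform γ le_rfl hcase.le, ?_, ?_⟩
    · rw [hD, hval, hg2, add_left_comm]
    · intro s hs
      match s, hs with
      | Nat.succ k', hk' =>
        have hkk : k + 1 ≤ k' := by omega
        have cA : ν ((X - C c) * g) < (((k' + 1) • γ : Λ) : WithTop Λ)
            + ((lc : WithTop Λ) + ν (hasseDeriv (k' + 1) g)) := by
          have h1 : ν g < (((k' + 1) • γ : Λ) : WithTop Λ) + ν (hasseDeriv (k' + 1) g) :=
            hg3 (k' + 1) (by omega)
          rw [hval, add_left_comm]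
          exact WithTop.add_lt_add_left WithTop.coe_ne_top h1
        have cB : ν ((X - C c) * g) < (((k' + 1) • γ : Λ) : WithTop Λ)
            + ν (hasseDeriv k' g) := by
          rcases eq_or_lt_of_le hkk with heq | hlt
          · subst heq
            calc ν ((X - C c) * g) = (lc : WithTop Λ) + ν g := hval
              _ < (γ : WithTop Λ) + ν g :=
                  WithTop.add_lt_add_right hgtop (WithTop.coe_lt_coe.2 hcase)
              _ = (γ : WithTop Λ) + ((((k + 1) • γ : Λ) : WithTop Λ) + ν (hasseDeriv (k + 1) g)) := by
                  rw [hg2]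
              _ = (((k + 1 + 1) • γ : Λ) : WithTop Λ) + ν (hasseDeriv (k + 1) g) := by
                  rw [coe_smul_succ (k + 1) γ, add_comm (((k + 1) • γ : Λ) : WithTop Λ) (γ : WithTop Λ), add_assoc]
          · have h1 : ν g < ((k' • γ : Λ) : WithTop Λ) + ν (hasseDeriv k' g) :=
              hg3 k' (by omega)
            calc ν ((X - C c) * g) = (lc : WithTop Λ) + ν g := hval
              _ < (lc : WithTop Λ) + (((k' • γ : Λ) : WithTop Λ) + ν (hasseDeriv k' g)) :=
                  WithTop.add_lt_add_left WithTop.coe_ne_top h1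
              _ ≤ (γ : WithTop Λ) + (((k' • γ : Λ) : WithTop Λ) + ν (hasseDeriv k' g)) :=
                  add_le_add_left (WithTop.coe_le_coe.2 hcase.le) _
              _ = (((k' + 1) • γ : Λ) : WithTop Λ) + ν (hasseDeriv k' g) := by
                  rw [coe_smul_succ, add_comm ((k' • γ : Λ) : WithTop Λ) (γ : WithTop Λ), add_assoc]
        calc ν ((X - C c) * g)
            < min ((((k' + 1) • γ : Λ) : WithTop Λ) + ((lc : WithTop Λ) + ν (hasseDeriv (k' + 1) g)))
              ((((k' + 1) • γ : Λ) : WithTop Λ) + ν (hasseDeriv k' g)) := lt_min cA cB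
          _ = (((k' + 1) • γ : Λ) : WithTop Λ)
              + min ((lc : WithTop Λ) + ν (hasseDeriv (k' + 1) g)) (ν (hasseDeriv k' g)) :=
              min_add_add_left _ _ _
          _ ≤ _ := add_le_add_right (hmin k') _


lemma Pinv_linear (hv : IsValOnField v) (c : AlgebraicClosure K) {lc : Λ}
    (hlc : (lc : WithTop Λ) = min (v (a - c)) (δ : WithTop Λ)) :
    Pinv (monoVal v a δ) (X - C c) lc 1 := by
  have hval : monoVal v a δ (X - C c) = (lc : WithTop Λ) := by
    have := nu_linear_mul a δ hv c 1
    rw [mul_one, nu_one a δ hv, add_zero] at this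
    rw [this, hlc]
  have hd1 : hasseDeriv 1 (X - C c : Polynomial (AlgebraicClosure K)) = 1 := by
    rw [hasseDeriv_one', derivative_sub, derivative_X, derivative_C, sub_zero]
  refine ⟨by rw [hval]; exact WithTop.coe_ne_top, le_refl 1, ?_, ?_, ?_⟩
  · intro s hs
    match s, hs with
    | 1, _ =>
      rw [hval, hd1, nu_one a δ hv, add_zero, one_nsmul]
    | Nat.succ (Nat.succ k), _ =>
      have : hasseDeriv (k + 2) (X - C c : Polynomial (AlgebraicClosure K)) = 0 := by
        rw [map_sub, hasseDeriv_X _ (by omega), hasseDeriv_C _ _ (by omega), sub_zero]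
      rw [this, nu_zero a δ hv, add_top]
      exact le_top
  · rw [hval, hd1, nu_one a δ hv, add_zero, one_nsmul]
  · intro s hs
    match s, hs with
    | Nat.succ (Nat.succ k), _ =>
      have : hasseDeriv (k + 2) (X - C c : Polynomial (AlgebraicClosure K)) = 0 := by
        rw [map_sub, hasseDeriv_X _ (by omega), hasseDeriv_C _ _ (by omega), sub_zero]
      rw [this, nu_zero a δ hv, add_top, hval]
      exact WithTop.coe_lt_top lc


lemma exists_coe_min (e : AlgebraicClosure K) :
    ∃ l : Λ, (l : WithTop Λ) = min (v e) (δ : WithTop Λ) := by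
  rcases le_total (δ : WithTop Λ) (v e) with h | h
  · exact ⟨δ, (min_eq_right h).symm⟩
  · have : v e ≠ ⊤ := by
      intro hh; rw [hh] at h; exact absurd (top_le_iff.1 h) WithTop.coe_ne_top
    rcases WithTop.ne_top_iff_exists.1 this with ⟨l, hl⟩
    exact ⟨l, by rw [min_eq_left h, hl]⟩

lemma Pinv_multiset (hv : IsValOnField v) :
    ∀ R : Multiset (AlgebraicClosure K), R ≠ 0 →
    ∃ (γ : Λ) (r : ℕ) (cm : AlgebraicClosure K), cm ∈ R ∧
      (γ : WithTop Λ) = min (v (a - cm)) (δ : WithTop Λ) ∧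
      (∀ c ∈ R, min (v (a - c)) (δ : WithTop Λ) ≤ (γ : WithTop Λ)) ∧
      Pinv (monoVal v a δ) ((R.map (fun c => X - C c)).prod) γ r := by
  intro R
  induction R using Multiset.induction_on with
  | empty => intro h; exact absurd rfl h
  | cons c t ih =>
    intro _
    obtain ⟨lc, hlc⟩ := exists_coe_min (v := v) δ (a - c)
    rcases eq_or_ne t 0 with rfl | ht
    · refine ⟨lc, 1, c, Multiset.mem_cons_self c 0, hlc, ?_, ?_⟩
      · intro c' hc'
        rw [Multiset.mem_cons] at hc'
        rcases hc' with rfl | hc'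
        · rw [hlc]
        · exact absurd hc' (Multiset.notMem_zero c')
      · have : ((Multiset.map (fun c => X - C c) (c ::ₘ 0)).prod : Polynomial (AlgebraicClosure K)) = X - C c := by
          simp
        rw [this]
        exact Pinv_linear a δ hv c hlc
    · obtain ⟨γ, r, cm, hcm, hγeq, hγub, hP⟩ := ih ht
      have hprod : ((c ::ₘ t).map (fun c => X - C c)).prod
          = (X - C c) * ((t.map (fun c => X - C c)).prod) := by
        rw [Multiset.map_cons, Multiset.prod_cons]
      obtain ⟨r', hP'⟩ := Pinv_step (monoVal v a δ) (nu_min_le_add a δ hv)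
        (fun f g h => nu_add_eq_left a δ hv h) c
        (fun h => by rw [nu_linear_mul a δ hv, hlc]) hP
      rw [← hprod] at hP'
      rcases le_total lc γ with hord | hord
      · refine ⟨max γ lc, r', cm, Multiset.mem_cons_of_mem hcm, ?_, ?_, hP'⟩
        · rw [max_eq_left hord, hγeq]
        · intro c' hc'
          rw [Multiset.mem_cons] at hc'
          rw [max_eq_left hord]
          rcases hc' with rfl | hc'
          · rw [← hlc]; exact WithTop.coe_le_coe.2 hord
          · exact hγub c' hc'
      · refine ⟨max γ lc, r', c, Multiset.mem_cons_self c t, ?_, ?_, hP'⟩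
        · rw [max_eq_right hord, hlc]
        · intro c' hc'
          rw [Multiset.mem_cons] at hc'
          rw [max_eq_right hord]
          rcases hc' with rfl | hc'
          · rw [hlc]
          · exact le_trans (hγub c' hc') (WithTop.coe_le_coe.2 hord)

lemma hasseDeriv_map {R S : Type*} [CommRing R] [CommRing S] (φ : R →+* S) (s : ℕ)
    (f : R[X]) : hasseDeriv s (f.map φ) = (hasseDeriv s f).map φ := by
  ext n
  simp [hasseDeriv_coeff, coeff_map, map_mul, map_natCast]


end OBCaux


open OBCaux in
/-- cofinality of μ-optimal balls: let `μ = res_K(v_{a,δ})`. Every closed ball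
`B ⊇ B(a,δ)` with `deg_K B = m` contains a closed ball `B' = B(b',γ')` with
`B ⊇ B' ⊇ B(a,δ)`, `deg_K B' = m`, and `B'` μ-optimal, i.e. `ε_μ(p_K(c)) = γ'` for some
`c ∈ Min_K B'`. -/
theorem optimalBallsCofinal
    (v : AlgebraicClosure K → WithTop Λ) (hv : IsValOnField v)
    (hdiv : IsDivisible Λ)
    (a : AlgebraicClosure K) (δ : Λ) (m : ℕ)
    (b : AlgebraicClosure K) (ε : Λ)
    (hsub : cBall v a δ ⊆ cBall v b ε)
    (hdeg : degKSet K (cBall v b ε) = m) :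
    ∃ (b' : AlgebraicClosure K) (γ' : Λ),
      cBall v b' γ' ⊆ cBall v b ε ∧
      cBall v a δ ⊆ cBall v b' γ' ∧
      degKSet K (cBall v b' γ') = m ∧
      ∃ c ∈ MinK K (cBall v b' γ'),
        IsEpsilon (resK (monoVal v a δ)) (minpoly K c) γ' := by
  classical
  -- basic membership facts
  have hself : ∀ (x : AlgebraicClosure K) (ρ : Λ), x ∈ cBall v x ρ := by
    intro x ρ
    show (ρ : WithTop Λ) ≤ v (x - x)
    rw [sub_self, v_zero hv]
    exact le_top
  have hab : (ε : WithTop Λ) ≤ v (a - b) := hsub (hself a δ)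
  -- the gap lemma: any value ≥ δ is ≥ ε
  have hgap : ∀ w : AlgebraicClosure K, (δ : WithTop Λ) ≤ v w → (ε : WithTop Λ) ≤ v w := by
    intro w hw
    have h1 : a + w ∈ cBall v a δ := by
      show (δ : WithTop Λ) ≤ v (a + w - a)
      rwa [add_sub_cancel_left]
    have h2 : (ε : WithTop Λ) ≤ v (a + w - b) := hsub h1
    have h3 : min (v (a + w - b)) (v (b - a)) ≤ v w := by
      have := hv.min_le_add (a + w - b) (b - a)
      rwa [show a + w - b + (b - a) = w by ring] at this
    refine le_trans (le_min h2 ?_) h3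
    rw [v_sub_comm hv b a]; exact hab
  -- choose a point of minimal degree in the big ball
  have hBne : (degK K '' cBall v b ε).Nonempty := ⟨degK K b, ⟨b, hself b ε, rfl⟩⟩
  obtain ⟨c, hcB, hcdeg⟩ : ∃ c ∈ cBall v b ε, degK K c = m := by
    have h := Nat.sInf_mem hBne
    rw [show sInf (degK K '' cBall v b ε) = m from hdeg] at h
    obtain ⟨c, hc, hc2⟩ := h
    exact ⟨c, hc, hc2⟩
  have hvac : (ε : WithTop Λ) ≤ v (a - c) := by
    refine le_trans (le_min hab ?_) (v_sub_trans hv a b c)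
    rw [v_sub_comm hv b c]
    exact hcB
  -- the minimal polynomial and its roots
  have hint : IsIntegral K c := Algebra.IsIntegral.isIntegral c
  set f : Polynomial K := minpoly K c with hfdef
  set φ := algebraMap K (AlgebraicClosure K) with hφ
  set F : Polynomial (AlgebraicClosure K) := f.map φ with hF
  have hfmonic : f.Monic := minpoly.monic hint
  have hFmonic : F.Monic := hfmonic.map φ
  have hfpos : 0 < f.natDegree := minpoly.natDegree_pos hint
  have hFsplits : F.Splits :=
    IsAlgClosed.splits F
  have hFprod : F = (F.roots.map (fun a => X - C a)).prod :=
    hFsplits.eq_prod_roots_of_monic hFmonic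
  have hFne : F ≠ 0 := hFmonic.ne_zero
  have hR0 : F.roots ≠ 0 := by
    intro h0
    have : F = 1 := by rw [hFprod, h0]; simp
    have := congrArg natDegree this
    rw [natDegree_one, hF, natDegree_map] at this
    omega
  have hcR : c ∈ F.roots := by
    rw [mem_roots hFne]
    show F.IsRoot c
    show eval c (f.map φ) = 0
    rw [eval_map, ← aeval_def, hfdef, minpoly.aeval]
  -- run the key-polynomial machine
  obtain ⟨γ', r, cm, hcmR, hγeq, hγub, hP⟩ := Pinv_multiset a δ hv F.roots hR0
  rw [← hFprod] at hP
  obtain ⟨hFtop, hr1, hP1, hP2, hP3⟩ := hP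
  -- properties of γ'
  have hγδ : (γ' : WithTop Λ) ≤ (δ : WithTop Λ) := hγeq ▸ min_le_right _ _
  have hγacm : (γ' : WithTop Λ) ≤ v (a - cm) := hγeq ▸ min_le_left _ _
  have hγlb : min (v (a - c)) (δ : WithTop Λ) ≤ (γ' : WithTop Λ) := hγub c hcR
  have hγε : ∀ w : AlgebraicClosure K, (γ' : WithTop Λ) ≤ v w → (ε : WithTop Λ) ≤ v w := by
    intro w hw
    rcases le_total (v (a - c)) (δ : WithTop Λ) with hle | hle
    · rw [min_eq_left hle] at hγlb
      exact le_trans (le_trans hvac hγlb) hw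
    · rw [min_eq_right hle] at hγlb
      have : (γ' : WithTop Λ) = (δ : WithTop Λ) := le_antisymm hγδ hγlb
      exact hgap w (by rw [← this]; exact hw)
  -- cm is in the big ball
  have hvacm : (ε : WithTop Λ) ≤ v (a - cm) := hγε _ hγacm
  have hcmB : cm ∈ cBall v b ε := by
    show (ε : WithTop Λ) ≤ v (cm - b)
    refine le_trans (le_min ?_ hab) (v_sub_trans hv cm a b)
    rw [v_sub_comm hv cm a]
    exact hvacm
  -- cm has the same minimal polynomial
  have hcmroot : aeval cm f = 0 := by
    have := (mem_roots hFne).1 hcmR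
    rw [aeval_def, ← eval_map]
    exact this
  have hminpoly_cm : f = minpoly K cm :=
    minpoly.eq_of_irreducible_of_monic (minpoly.irreducible hint) hcmroot hfmonic
  have hcmdeg : degK K cm = m := by
    rw [degK, ← hminpoly_cm, ← hcdeg]; rfl
  -- the two inclusions
  have hsub1 : cBall v cm γ' ⊆ cBall v b ε := by
    intro x hx
    show (ε : WithTop Λ) ≤ v (x - b)
    have h1 : (ε : WithTop Λ) ≤ v (x - cm) := hγε _ hx
    have h2 : (ε : WithTop Λ) ≤ v (cm - b) := hcmB
    exact le_trans (le_min h1 h2) (v_sub_trans hv x cm b)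
  have hsub2 : cBall v a δ ⊆ cBall v cm γ' := by
    intro x hx
    show (γ' : WithTop Λ) ≤ v (x - cm)
    have h1 : (γ' : WithTop Λ) ≤ v (x - a) := le_trans hγδ hx
    exact le_trans (le_min h1 hγacm) (v_sub_trans hv x a cm)
  -- degree of B' is m
  have hcmB' : cm ∈ cBall v cm γ' := hself cm γ'
  have hne' : (degK K '' cBall v cm γ').Nonempty := ⟨degK K cm, ⟨cm, hcmB', rfl⟩⟩
  have hdegB' : degKSet K (cBall v cm γ') = m := by
    have hd1 : sInf (degK K '' cBall v cm γ') ≤ m :=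
      Nat.sInf_le ⟨cm, hcmB', hcmdeg⟩
    have hd2 : m ≤ sInf (degK K '' cBall v cm γ') := by
      obtain ⟨x, hx, hx2⟩ := Nat.sInf_mem hne'
      have hxB : x ∈ cBall v b ε := hsub1 hx
      calc m = sInf (degK K '' cBall v b ε) := hdeg.symm
        _ ≤ degK K x := Nat.sInf_le ⟨x, hxB, rfl⟩
        _ = _ := hx2
    exact le_antisymm hd1 hd2
  -- translation between resK ∘ monoVal on K[X] and monoVal on F
  have hres : resK (monoVal v a δ) f = monoVal v a δ F := rfl
  have hresD : ∀ s : ℕ, resK (monoVal v a δ) (hasseDeriv s f)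
      = monoVal v a δ (hasseDeriv s F) := by
    intro s
    show monoVal v a δ ((hasseDeriv s f).map φ) = monoVal v a δ (hasseDeriv s F)
    rw [hF, hasseDeriv_map]
  refine ⟨cm, γ', hsub1, hsub2, hdegB', cm, ⟨hcmB', by rw [hcmdeg, hdegB']⟩, ?_⟩
  rw [← hminpoly_cm]
  constructor
  · intro s hs _
    rw [hres, hresD]
    exact hP1 s hs
  · refine ⟨r, hr1, ?_, ?_⟩
    · intro h0
      have : hasseDeriv r F = 0 := by rw [hF, hasseDeriv_map, h0, Polynomial.map_zero]
      rw [this, nu_zero a δ hv, add_top] at hP2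
      exact hFtop hP2
    · rw [hres, hresD]
      exact hP2
end
end
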